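/- arXiv:2105.07746 — 2 statements merged into one kernel-verified Lean document; each statement's English description precedes it below -/
import Mathlib

section
/- Let κ be a regular uncountable cardinal. Then the stationary splitting number s^cl_κ is strictly greater than κ if and only if κ is ineffable. -/
open Set Cardinal

/-- `c` is a club in the well-ordered type `α` (thought of as the cardinal `κ = #α`):
it is closed (contains the supremum of each of its nonempty bounded subsets) and unbounded. -/
def IsClubIn {α : Type*} [LinearOrder α] (c : Set α) : Prop :=
  (∀ s ⊆ c, s.Nonempty → ∀ a : α, IsLUB s a → a ∈ c) ∧ ∀ a : α, ∃ b ∈ c, a < b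

/-- `x` is stationary: it meets every club. -/
def IsStatIn {α : Type*} [LinearOrder α] (x : Set α) : Prop :=
  ∀ c : Set α, IsClubIn c → (x ∩ c).Nonempty

/-- `y` stationarily splits `x`: both `x ∩ y` and `x \ y` are stationary. -/
def StatSplits {α : Type*} [LinearOrder α] (y x : Set α) : Prop :=
  IsStatIn (x ∩ y) ∧ IsStatIn (x \ y)

/-- The stationary splitting number `s^cl_κ`: the least cardinality of a family `S` of
stationary sets such that every stationary set is stationarily split by a member of `S`. -/
noncomputable def statSplittingNumber (α : Type*) [LinearOrder α] : Cardinal :=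
  sInf { c : Cardinal | ∃ S : Set (Set α), (∀ y ∈ S, IsStatIn y) ∧
    (∀ x : Set α, IsStatIn x → ∃ y ∈ S, StatSplits y x) ∧ c = #S }

/-- `κ` is ineffable: for every partition `f` of the two-element subsets `{i, j}` (`i < j`)
of `κ` into two pieces there is a stationary homogeneous set. -/
def Ineffable (α : Type*) [LinearOrder α] : Prop :=
  ∀ f : α → α → Bool, ∃ x : Set α, IsStatIn x ∧
    ∃ c : Bool, ∀ i ∈ x, ∀ j ∈ x, i < j → f i j = c

namespace StatSplit
set_option linter.unusedSectionVars false
set_option linter.unusedVariables false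
universe u v
variable {γ : Type u} [LinearOrder γ] [WellFoundedLT γ]
structure Nice (γ : Type u) [LinearOrder γ] : Prop where
  bdd : ∀ s : Set γ, #s < #γ → ∃ b : γ, ∀ c ∈ s, c < b
  unc : ℵ₀ < #γ
  seg : ∀ a : γ, #(Iio a) < #γ
theorem Nice.nomax (hN : Nice γ) (a : γ) : ∃ b, a < b := by
  obtain ⟨b, hb⟩ := hN.bdd {a} (by
    rw [Cardinal.mk_singleton]
    exact lt_trans Cardinal.one_lt_aleph0 hN.unc)
  exact ⟨b, hb a rfl⟩
theorem Nice.nonempty (hN : Nice γ) : Nonempty γ := by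
  by_contra h
  rw [not_nonempty_iff] at h
  have h0 : #γ = 0 := Cardinal.mk_eq_zero γ
  have h1 := hN.unc
  rw [h0] at h1
  exact absurd h1 (by simp)
theorem exists_isLUB {s : Set γ} (hne : s.Nonempty) (hbd : ∃ b : γ, ∀ c ∈ s, c ≤ b) :
    ∃ a, IsLUB s a := by
  obtain ⟨b, hb⟩ := hbd
  have hub : (upperBounds s).Nonempty := ⟨b, fun c hc => hb c hc⟩
  refine ⟨(IsWellFounded.wf (r := ((· < ·) : γ → γ → Prop))).min _ hub, ?_, ?_⟩
  · exact (IsWellFounded.wf).min_mem _ hub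
  · intro u hu
    exact not_lt.mp ((IsWellFounded.wf).not_lt_min _ hu)
theorem countable_small (hN : Nice γ) (s : Set γ) (hs : s.Countable) : #s < #γ :=
  lt_of_le_of_lt (by
    have := hs.to_subtype
    exact Cardinal.mk_le_aleph0) hN.unc
theorem chain_lub (hN : Nice γ) (f : ℕ → γ) (hf : StrictMono f) :
    ∃ a, IsLUB (range f) a ∧ ∀ n, f n < a := by
  obtain ⟨b, hb⟩ := hN.bdd (range f) (countable_small hN _ (countable_range f))
  obtain ⟨a, ha⟩ := exists_isLUB (range_nonempty f) ⟨b, fun c hc => (hb c hc).le⟩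
  refine ⟨a, ha, fun n => lt_of_lt_of_le (hf (Nat.lt_succ_self n)) (ha.1 ⟨n+1, rfl⟩)⟩
theorem isLUB_of_interleaved {f : ℕ → γ} {a : γ} (ha : IsLUB (range f) a)
    {s : Set γ} (hs : ∀ n, ∃ d ∈ s, f n < d ∧ d ≤ f (n+1)) :
    ∃ t ⊆ s, t.Nonempty ∧ IsLUB t a := by
  classical
  refine ⟨{d ∈ s | ∃ n, f n < d ∧ d ≤ f (n+1)}, fun d hd => hd.1, ?_, ?_, ?_⟩
  · obtain ⟨d, hd, h1, h2⟩ := hs 0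
    exact ⟨d, hd, 0, h1, h2⟩
  · rintro d ⟨_, n, _, h2⟩
    exact le_trans h2 (ha.1 ⟨n+1, rfl⟩)
  · intro u hu
    refine ha.2 ?_
    rintro _ ⟨n, rfl⟩
    obtain ⟨d, hd, h1, h2⟩ := hs n
    exact le_trans h1.le (hu ⟨hd, n, h1, h2⟩)

/-! ### Clubs -/

theorem clubIn_univ (hN : Nice γ) : IsClubIn (univ : Set γ) :=
  ⟨fun _ _ _ _ _ => trivial, fun a => (hN.nomax a).imp (fun b hb => ⟨trivial, hb⟩)⟩

theorem clubIn_Ioi (hN : Nice γ) (a : γ) : IsClubIn (Ioi a) := by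
  constructor
  · rintro s hs ⟨c, hc⟩ b hb
    exact lt_of_lt_of_le (hs hc) (hb.1 hc)
  · intro b
    obtain ⟨d, hd⟩ := hN.nomax (max a b)
    exact ⟨d, lt_of_le_of_lt (le_max_left a b) hd, lt_of_le_of_lt (le_max_right a b) hd⟩

theorem lub_of_tail {f : ℕ → γ} (hf : StrictMono f) {a : γ} (ha : IsLUB (range f) a)
    (n : ℕ) : IsLUB (range fun k => f (n + k)) a := by
  constructor
  · rintro _ ⟨k, rfl⟩
    exact ha.1 ⟨n + k, rfl⟩
  · intro u hu
    refine ha.2 ?_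
    rintro _ ⟨m, rfl⟩
    exact le_trans (hf.monotone (Nat.le_add_left m n)) (hu ⟨m, rfl⟩)

theorem clubIn_iInter (hN : Nice γ) {ι : Type v}
    (hι : Cardinal.lift.{u} #ι < Cardinal.lift.{v} #γ) {C : ι → Set γ}
    (hC : ∀ i, IsClubIn (C i)) : IsClubIn (⋂ i, C i) := by
  classical
  cases isEmpty_or_nonempty ι with
  | inl h => rw [iInter_of_empty]; exact clubIn_univ hN
  | inr h =>
    constructor
    · intro s hs hne a ha
      refine mem_iInter.mpr fun i => (hC i).1 s (fun c hc => mem_iInter.mp (hs hc) i) hne a ha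
    · intro a₀
      -- next point in each club
      have next : ∀ (i : ι) (b : γ), ∃ d ∈ C i, b < d := fun i b => (hC i).2 b
      choose nx hnx1 hnx2 using next
      -- a strict bound for all the next points
      have bstep : ∀ b : γ, ∃ B : γ, ∀ i, nx i b < B := by
        intro b
        have hsmall : #(range fun i => nx i b) < #γ := by
          have h1 : Cardinal.lift.{v} #(range fun i => nx i b) ≤ Cardinal.lift.{u} #ι :=
            Cardinal.mk_range_le_lift
          have := lt_of_le_of_lt h1 hι
          exact (Cardinal.lift_lt).mp this
        obtain ⟨B, hB⟩ := hN.bdd _ hsmall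
        exact ⟨B, fun i => hB _ ⟨i, rfl⟩⟩
      choose st hst using bstep
      set f : ℕ → γ := fun n => st^[n+1] a₀ with hfdef
      have hfs : ∀ n, f (n+1) = st (f n) := by
        intro n
        simp only [hfdef, Function.iterate_succ_apply']
      have hstep : ∀ b : γ, b < st b := by
        intro b
        obtain ⟨i⟩ := h
        exact lt_trans (hnx2 i b) (hst b i)
      have hmono : StrictMono f := by
        refine strictMono_nat_of_lt_succ fun n => ?_
        rw [hfs n]; exact hstep _
      obtain ⟨a, ha, hfa⟩ := chain_lub hN f hmono
      refine ⟨a, ?_, ?_⟩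
      · refine mem_iInter.mpr fun i => ?_
        have hwit : ∀ n, ∃ d ∈ C i, f n < d ∧ d ≤ f (n+1) := by
          intro n
          refine ⟨nx i (f n), hnx1 i (f n), hnx2 i (f n), ?_⟩
          rw [hfs n]; exact (hst (f n) i).le
        obtain ⟨t, hts, htne, hlub⟩ := isLUB_of_interleaved ha hwit
        exact (hC i).1 t hts htne a hlub
      · calc a₀ < st a₀ := hstep a₀
          _ = f 0 := rfl
          _ < a := hfa 0

theorem clubIn_inter (hN : Nice γ) {c d : Set γ} (hc : IsClubIn c) (hd : IsClubIn d) :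
    IsClubIn (c ∩ d) := by
  rw [Set.inter_eq_iInter]
  refine clubIn_iInter hN ?_ (fun b => by cases b <;> simpa)
  have h2 : Cardinal.lift.{u} #Bool = 2 := by simp [Cardinal.mk_bool]
  rw [h2]
  exact lt_trans (by exact_mod_cast Cardinal.nat_lt_aleph0 2)
    ((Cardinal.aleph0_lt_lift).mpr hN.unc)

/-! ### Diagonal intersection -/

def diagInter (C : γ → Set γ) : Set γ := {a | ∀ i, i < a → a ∈ C i}

theorem clubIn_diagInter (hN : Nice γ) {C : γ → Set γ} (hC : ∀ i, IsClubIn (C i)) :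
    IsClubIn (diagInter C) := by
  constructor
  · intro s hs hne a ha i hia
    have hex : ∃ c ∈ s, i < c := by
      by_contra hcon
      push_neg at hcon
      exact absurd hia (not_lt.mpr (ha.2 fun c hc => hcon c hc))
    obtain ⟨c₀, hc₀s, hc₀⟩ := hex
    have hlub' : IsLUB (s ∩ Ioi i) a := by
      constructor
      · intro c hc; exact ha.1 hc.1
      · intro u hu
        refine ha.2 ?_
        intro c hc
        rcases le_or_gt c i with h | h
        · exact le_trans h (le_trans hc₀.le (hu ⟨hc₀s, hc₀⟩))
        · exact hu ⟨hc, h⟩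
    refine (hC i).1 (s ∩ Ioi i) ?_ ⟨c₀, hc₀s, hc₀⟩ a hlub'
    intro c hc
    exact hs hc.1 i hc.2
  · intro a₀
    have hstep : ∀ b : γ, ∃ b', b < b' ∧ ∀ i, i ≤ b → b' ∈ C i := by
      intro b
      have hcard : Cardinal.lift.{u} #(↥(Iic b)) < Cardinal.lift.{u} #γ := by
        rw [Cardinal.lift_lt]
        have hIic : (Iic b : Set γ) = insert b (Iio b) := by
          ext c
          simp [le_iff_lt_or_eq, or_comm]
        rw [hIic]
        exact lt_of_le_of_lt Cardinal.mk_insert_le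
          (Cardinal.add_lt_of_lt hN.unc.le (hN.seg b)
            (lt_trans Cardinal.one_lt_aleph0 hN.unc))
      have hclub := clubIn_iInter hN hcard (C := fun i : ↥(Iic b) => C ↑i) (fun i => hC ↑i)
      obtain ⟨b', hb'mem, hbb'⟩ := hclub.2 b
      exact ⟨b', hbb', fun i hi => mem_iInter.mp hb'mem ⟨i, hi⟩⟩
    choose st hst1 hst2 using hstep
    set f : ℕ → γ := fun n => st^[n+1] a₀ with hfdef
    have hfs : ∀ n, f (n+1) = st (f n) := fun n => by
      simp only [hfdef, Function.iterate_succ_apply']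
    have hmono : StrictMono f := strictMono_nat_of_lt_succ fun n => by
      rw [hfs n]; exact hst1 _
    obtain ⟨a, ha, hfa⟩ := chain_lub hN f hmono
    refine ⟨a, ?_, lt_trans (hst1 a₀) (hfa 0)⟩
    intro i hi
    have hex : ∃ n, i < f n := by
      by_contra hcon
      push_neg at hcon
      exact absurd hi (not_lt.mpr (ha.2 (by rintro _ ⟨n, rfl⟩; exact hcon n)))
    obtain ⟨n, hn⟩ := hex
    have hwit : ∀ k, ∃ d ∈ C i, f (n+k) < d ∧ d ≤ f (n+(k+1)) := by
      intro k
      refine ⟨f (n+k+1), ?_, hmono (Nat.lt_succ_self _), le_rfl⟩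
      rw [hfs (n+k)]
      exact hst2 (f (n+k)) i (le_of_lt (lt_of_lt_of_le hn (hmono.monotone (Nat.le_add_right n k))))
    obtain ⟨t, hts, htne, hlub⟩ := isLUB_of_interleaved (lub_of_tail hmono ha n) hwit
    exact (hC i).1 t hts htne a hlub

/-! ### Stationary sets -/

theorem statIn_mono {x y : Set γ} (hxy : x ⊆ y) (hx : IsStatIn x) : IsStatIn y :=
  fun c hc => (hx c hc).imp fun a ha => ⟨hxy ha.1, ha.2⟩

theorem statIn_univ (hN : Nice γ) : IsStatIn (univ : Set γ) := by
  intro c hc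
  obtain ⟨a⟩ := hN.nonempty
  obtain ⟨b, hb, _⟩ := hc.2 a
  exact ⟨b, trivial, hb⟩

theorem not_statIn_iff {x : Set γ} : ¬ IsStatIn x ↔ ∃ c, IsClubIn c ∧ x ∩ c = ∅ := by
  unfold IsStatIn
  push_neg
  simp only [Set.not_nonempty_iff_eq_empty]

theorem statIn_inter_club (hN : Nice γ) {x c : Set γ} (hx : IsStatIn x) (hc : IsClubIn c) :
    IsStatIn (x ∩ c) := by
  intro d hd
  obtain ⟨a, ha, hcd⟩ := hx (c ∩ d) (clubIn_inter hN hc hd)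
  exact ⟨a, ⟨ha, hcd.1⟩, hcd.2⟩

theorem statIn_union (hN : Nice γ) {x y : Set γ} (h : IsStatIn (x ∪ y)) :
    IsStatIn x ∨ IsStatIn y := by
  by_contra hcon
  push_neg at hcon
  obtain ⟨c, hc, hxc⟩ := not_statIn_iff.mp hcon.1
  obtain ⟨d, hd, hyd⟩ := not_statIn_iff.mp hcon.2
  obtain ⟨a, ha, hacd⟩ := h (c ∩ d) (clubIn_inter hN hc hd)
  rcases ha with ha | ha
  · exact Set.notMem_empty a (hxc ▸ (⟨ha, hacd.1⟩ : a ∈ x ∩ c))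
  · exact Set.notMem_empty a (hyd ▸ (⟨ha, hacd.2⟩ : a ∈ y ∩ d))

theorem not_statIn_bounded (hN : Nice γ) {x : Set γ} {b : γ} (h : ∀ a ∈ x, a ≤ b) :
    ¬ IsStatIn x := by
  rw [not_statIn_iff]
  refine ⟨Ioi b, clubIn_Ioi hN b, ?_⟩
  ext a
  simp only [mem_inter_iff, mem_Ioi, mem_empty_iff_false, iff_false, not_and]
  intro hax hba
  exact absurd (h a hax) (not_le.mpr hba)

theorem statIn_unbounded (hN : Nice γ) {x : Set γ} (hx : IsStatIn x) (a : γ) :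
    ∃ b ∈ x, a < b := by
  obtain ⟨b, hbx, hb⟩ := hx (Ioi a) (clubIn_Ioi hN a)
  exact ⟨b, hbx, hb⟩

theorem nonstat_diagUnion (hN : Nice γ) {N : γ → Set γ} (h : ∀ i, ¬ IsStatIn (N i)) :
    ¬ IsStatIn {a | ∃ i, i < a ∧ a ∈ N i} := by
  classical
  have hc : ∀ i, ∃ c, IsClubIn c ∧ N i ∩ c = ∅ := fun i => not_statIn_iff.mp (h i)
  choose C hC1 hC2 using hc
  rw [not_statIn_iff]
  refine ⟨diagInter C, clubIn_diagInter hN hC1, ?_⟩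
  ext a
  simp only [mem_inter_iff, mem_setOf_eq, mem_empty_iff_false, iff_false, not_and]
  rintro ⟨i, hia, haN⟩ hD
  have hmem : a ∈ N i ∩ C i := ⟨haN, hD i hia⟩
  rw [hC2 i] at hmem
  exact hmem

theorem fodor (hN : Nice γ) {T : Set γ} (hT : IsStatIn T) (f : γ → γ)
    (hf : ∀ a ∈ T, f a < a) : ∃ δ, IsStatIn {a | a ∈ T ∧ f a = δ} := by
  by_contra hcon
  push_neg at hcon
  have hds := nonstat_diagUnion hN (N := fun δ => {a | a ∈ T ∧ f a = δ}) hcon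
  refine hds (statIn_mono ?_ hT)
  intro a ha
  exact ⟨f a, hf a ha, ha, rfl⟩

/-! ### Accumulation points -/

def accPts (s : Set γ) : Set γ := {a | (∃ b, b < a) ∧ ∀ b < a, ∃ d ∈ s, b < d ∧ d < a}

theorem accPts_closed (s : Set γ) :
    ∀ t ⊆ accPts s, t.Nonempty → ∀ a, IsLUB t a → a ∈ accPts s := by
  intro t ht hne a ha
  by_cases hat : a ∈ t
  · exact ht hat
  · have hlt : ∀ c ∈ t, c < a := fun c hc =>
      lt_of_le_of_ne (ha.1 hc) (by rintro rfl; exact hat hc)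
    obtain ⟨c₀, hc₀⟩ := hne
    refine ⟨⟨c₀, hlt _ hc₀⟩, ?_⟩
    intro b hb
    have hex : ∃ c ∈ t, b < c := by
      by_contra hcon
      push_neg at hcon
      exact absurd hb (not_lt.mpr (ha.2 fun c hc => hcon c hc))
    obtain ⟨c, hct, hbc⟩ := hex
    obtain ⟨d, hds, hd1, hd2⟩ := (ht hct).2 b hbc
    exact ⟨d, hds, hd1, lt_trans hd2 (hlt _ hct)⟩

theorem clubIn_accPts (hN : Nice γ) {s : Set γ} (hs : ∀ a, ∃ b ∈ s, a < b) :
    IsClubIn (accPts s) := by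
  refine ⟨accPts_closed s, ?_⟩
  intro a₀
  have hstep : ∀ b : γ, ∃ d, d ∈ s ∧ b < d := by
    intro b
    obtain ⟨d, h1, h2⟩ := hs b
    exact ⟨d, h1, h2⟩
  choose nx hnx1 hnx2 using hstep
  set f : ℕ → γ := fun n => nx^[n+1] a₀ with hfdef
  have hfs : ∀ n, f (n+1) = nx (f n) := fun n => by
    simp only [hfdef, Function.iterate_succ_apply']
  have hmono : StrictMono f := strictMono_nat_of_lt_succ fun n => by
    rw [hfs n]; exact hnx2 _
  obtain ⟨a, ha, hfa⟩ := chain_lub hN f hmono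
  refine ⟨a, ⟨⟨f 0, hfa 0⟩, ?_⟩, lt_trans (hnx2 a₀) (hfa 0)⟩
  intro b hb
  have hex : ∃ n, b < f n := by
    by_contra hcon
    push_neg at hcon
    exact absurd hb (not_lt.mpr (ha.2 (by rintro _ ⟨n, rfl⟩; exact hcon n)))
  obtain ⟨n, hn⟩ := hex
  refine ⟨f (n+1), by rw [hfs n]; exact hnx1 _, lt_trans hn (hmono (Nat.lt_succ_self n)), hfa (n+1)⟩

/-- The club of limit points of the whole order. -/
theorem clubIn_lim (hN : Nice γ) : IsClubIn (accPts (univ : Set γ)) :=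
  clubIn_accPts hN (fun a => (hN.nomax a).imp fun b hb => ⟨trivial, hb⟩)


/-! ### Jensen–Kunen: sequence ineffability from the partition property -/

section JK
variable (S : γ → Set γ)

def dset (β c : γ) : Set γ := symmDiff (S β) (S c ∩ Iio β)

theorem dset_subset (hS : ∀ a, S a ⊆ Iio a) (β c : γ) : dset S β c ⊆ Iio β := by
  intro d hd
  rw [dset, Set.mem_symmDiff] at hd
  rcases hd with ⟨h1, _⟩ | ⟨h1, _⟩
  · exact hS β h1
  · exact h1.2

theorem dset_nonempty {β c : γ} (h : S β ≠ S c ∩ Iio β) : (dset S β c).Nonempty := by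
  rw [Set.nonempty_iff_ne_empty]
  intro h0
  exact h (symmDiff_eq_bot.mp h0)

open Classical in
noncomputable def md (β c : γ) : γ :=
  if h : (dset S β c).Nonempty then
    (IsWellFounded.wf (r := ((· < ·) : γ → γ → Prop))).min _ h else β

theorem md_mem {β c : γ} (h : S β ≠ S c ∩ Iio β) : md S β c ∈ dset S β c := by
  rw [md, dif_pos (dset_nonempty S h)]
  exact (IsWellFounded.wf).min_mem _ _

theorem md_le {β c d : γ} (h : S β ≠ S c ∩ Iio β) (hd : d ∈ dset S β c) : md S β c ≤ d := by
  rw [md, dif_pos (dset_nonempty S h)]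
  exact not_lt.mp ((IsWellFounded.wf).not_lt_min _ hd)

theorem md_lt (hS : ∀ a, S a ⊆ Iio a) {β c : γ} (h : S β ≠ S c ∩ Iio β) : md S β c < β :=
  dset_subset S hS β c (md_mem S h)

theorem md_congr {β c c' : γ} (h : S c ∩ Iio β = S c' ∩ Iio β) : md S β c = md S β c' := by
  have hd : dset S β c = dset S β c' := by rw [dset, dset, h]
  unfold md
  rw [hd]

theorem agree_below {β c d : γ} (h : S β ≠ S c ∩ Iio β) (hd : d < md S β c) :
    d ∈ S β ↔ d ∈ S c ∩ Iio β := by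
  by_contra hcon
  have hmem : d ∈ dset S β c := by
    rw [dset, Set.mem_symmDiff]
    by_cases h1 : d ∈ S β
    · exact Or.inl ⟨h1, fun h2 => hcon ⟨fun _ => h2, fun _ => h1⟩⟩
    · by_cases h2 : d ∈ S c ∩ Iio β
      · exact Or.inr ⟨h2, h1⟩
      · exact absurd ⟨fun ha => absurd ha h1, fun hb => absurd hb h2⟩ hcon
  exact absurd hd (not_lt.mpr (md_le S h hmem))

theorem jk_mono (hS : ∀ a, S a ⊆ Iio a) {H : Set γ} {cc : Bool}
    (hdir : ∀ i ∈ H, ∀ j ∈ H, i < j → S i ≠ S j ∩ Iio i →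
      md S i j ∈ (bif cc then S j \ S i else S i \ S j))
    {β c c' : γ} (hβ : β ∈ H) (hc : c ∈ H) (hc' : c' ∈ H)
    (h1 : β < c) (h2 : c < c') (hne : S β ≠ S c ∩ Iio β) :
    S β ≠ S c' ∩ Iio β ∧ md S β c' ≤ md S β c := by
  by_cases hcase : S c = S c' ∩ Iio c
  · have hsets : S c ∩ Iio β = S c' ∩ Iio β := by
      rw [hcase]
      ext d
      simp only [mem_inter_iff, mem_Iio, and_congr_left_iff]
      intro hd
      simp [lt_trans hd h1]
    refine ⟨by rw [← hsets]; exact hne, ?_⟩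
    rw [md_congr S hsets]
  · have hdirε := hdir c hc c' hc' h2 hcase
    have hεlt : md S c c' < c := md_lt S hS hcase
    by_cases hεβ : md S c c' < β
    · have hδβ : md S β c < β := md_lt S hS hne
      rcases lt_trichotomy (md S β c) (md S c c') with hlt | heq | hgt
      · -- md β c < md c c' : it witnesses difference for (β, c') too
        have hagree : md S β c ∈ S c ↔ md S β c ∈ S c' := by
          have hag := agree_below S hcase (d := md S β c) hlt
          have hδc : md S β c < c := lt_trans hδβ h1
          simpa [hδc] using hag
        have hδmem := md_mem S hne
        rw [dset, Set.mem_symmDiff] at hδmem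
        have hmem' : md S β c ∈ dset S β c' := by
          rw [dset, Set.mem_symmDiff]
          rcases hδmem with ⟨ha, hb⟩ | ⟨ha, hb⟩
          · exact Or.inl ⟨ha, fun hmem => hb ⟨hagree.mpr hmem.1, hδβ⟩⟩
          · exact Or.inr ⟨⟨hagree.mp ha.1, hδβ⟩, hb⟩
        have hne' : S β ≠ S c' ∩ Iio β := by
          intro h0
          have h00 : (dset S β c') = ∅ := symmDiff_eq_bot.mpr h0
          rw [h00] at hmem'
          exact hmem'
        exact ⟨hne', md_le S hne' hmem'⟩
      · -- equal : impossible by directions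
        exfalso
        have hdirδ := hdir β hβ c hc h1 hne
        cases cc with
        | true =>
          simp only [Bool.cond_true] at hdirδ hdirε
          rw [← heq] at hdirε
          exact hdirε.2 hdirδ.1
        | false =>
          simp only [Bool.cond_false] at hdirδ hdirε
          rw [← heq] at hdirε
          exact hdirδ.2 hdirε.1
      · -- md c c' < md β c : it witnesses difference for (β, c')
        have hagree : md S c c' ∈ S β ↔ md S c c' ∈ S c := by
          have hag := agree_below S hne (d := md S c c') hgt
          simpa [hεβ] using hag
        have hεc' : md S c c' ∈ dset S β c' := by
          rw [dset, Set.mem_symmDiff]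
          cases cc with
          | true =>
            simp only [Bool.cond_true] at hdirε
            exact Or.inr ⟨⟨hdirε.1, hεβ⟩, fun h0 => hdirε.2 (hagree.mp h0)⟩
          | false =>
            simp only [Bool.cond_false] at hdirε
            exact Or.inl ⟨hagree.mpr hdirε.1, fun h0 => hdirε.2 h0.1⟩
        have hne' : S β ≠ S c' ∩ Iio β := by
          intro h0
          have h00 : (dset S β c') = ∅ := symmDiff_eq_bot.mpr h0
          rw [h00] at hεc'
          exact hεc'
        exact ⟨hne', le_trans (md_le S hne' hεc') hgt.le⟩
    · -- β ≤ md c c' : S c and S c' agree below β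
      have hsets : S c ∩ Iio β = S c' ∩ Iio β := by
        ext d
        simp only [mem_inter_iff, mem_Iio]
        constructor
        · rintro ⟨hd1, hd2⟩
          have hag := agree_below S hcase (d := d) (lt_of_lt_of_le hd2 (not_lt.mp hεβ))
          exact ⟨(hag.mp ((by simpa [lt_trans hd2 h1, hd1]
            : d ∈ S c ∧ True).1)).1, hd2⟩
        · rintro ⟨hd1, hd2⟩
          have hag := agree_below S hcase (d := d) (lt_of_lt_of_le hd2 (not_lt.mp hεβ))
          refine ⟨?_, hd2⟩
          have := hag.mpr ⟨hd1, lt_trans hd2 h1⟩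
          exact this
      refine ⟨by rw [← hsets]; exact hne, ?_⟩
      rw [md_congr S hsets]


theorem seq_ineffable (hN : Nice γ) (hIneff : Ineffable γ) (S : γ → Set γ)
    (hS : ∀ a, S a ⊆ Iio a) : ∃ A : Set γ, IsStatIn {a | A ∩ Iio a = S a} := by
  classical
  obtain ⟨H, hH, cc, hhom⟩ :=
    hIneff (fun i j => decide (S i = S j ∩ Iio i) || decide (md S i j ∈ S j))
  have hdir : ∀ i ∈ H, ∀ j ∈ H, i < j → S i ≠ S j ∩ Iio i →
      md S i j ∈ (bif cc then S j \ S i else S i \ S j) := by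
    intro i hi j hj hij hne
    have h := hhom i hi j hj hij
    have hmem := md_mem S hne
    rw [dset, Set.mem_symmDiff] at hmem
    cases cc with
    | true =>
      rw [Bool.or_eq_true, decide_eq_true_eq, decide_eq_true_eq] at h
      have hmsj : md S i j ∈ S j := h.resolve_left hne
      simp only [Bool.cond_true]
      rcases hmem with ⟨h1, h2⟩ | ⟨h1, h2⟩
      · exact absurd ⟨hmsj, hS i h1⟩ h2
      · exact ⟨hmsj, h2⟩
    | false =>
      rw [Bool.or_eq_false_iff, decide_eq_false_iff_not, decide_eq_false_iff_not] at h
      simp only [Bool.cond_false]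
      rcases hmem with ⟨h1, h2⟩ | ⟨h1, h2⟩
      · exact ⟨h1, h.2⟩
      · exact absurd h1.1 h.2
  -- the frequently-different part of H is not stationary
  have hBfnot : ¬ IsStatIn {β | β ∈ H ∧ ∃ c, c ∈ H ∧ β < c ∧ S β ≠ S c ∩ Iio β} := by
    intro hBfstat
    -- for each such β, a witness realizing the minimal difference point
    have hM : ∀ β, β ∈ H → (∃ c, c ∈ H ∧ β < c ∧ S β ≠ S c ∩ Iio β) →
        ∃ c, c ∈ H ∧ β < c ∧ S β ≠ S c ∩ Iio β ∧
          (∀ c', c' ∈ H → c ≤ c' → S β ≠ S c' ∩ Iio β ∧ md S β c' = md S β c) := by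
      intro β hβH hex
      set M := {d | ∃ c, c ∈ H ∧ β < c ∧ S β ≠ S c ∩ Iio β ∧ md S β c = d} with hMdef
      have hMne : M.Nonempty := by
        obtain ⟨c₀, hc₀, hβc₀, hne₀⟩ := hex
        exact ⟨md S β c₀, c₀, hc₀, hβc₀, hne₀, rfl⟩
      have hmin := (IsWellFounded.wf (r := ((· < ·) : γ → γ → Prop))).min_mem M hMne
      obtain ⟨c, hcH, hβc, hnec, hmdc⟩ := hmin
      refine ⟨c, hcH, hβc, hnec, ?_⟩
      intro c' hc' hcc'
      rcases eq_or_lt_of_le hcc' with rfl | hlt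
      · exact ⟨hnec, rfl⟩
      · obtain ⟨hne', hle⟩ := jk_mono S hS hdir hβH hcH hc' hβc hlt hnec
        refine ⟨hne', le_antisymm hle ?_⟩
        have hmem : md S β c' ∈ M := ⟨c', hc', lt_trans hβc hlt, hne', rfl⟩
        have := (IsWellFounded.wf (r := ((· < ·) : γ → γ → Prop))).not_lt_min M hmem
        rw [hmdc]
        exact not_lt.mp this
    -- package as functions
    have hM' : ∀ β : γ, ∃ c : γ, β ∈ H → (∃ c₂, c₂ ∈ H ∧ β < c₂ ∧ S β ≠ S c₂ ∩ Iio β) →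
        (c ∈ H ∧ β < c ∧ S β ≠ S c ∩ Iio β ∧
          (∀ c', c' ∈ H → c ≤ c' → S β ≠ S c' ∩ Iio β ∧ md S β c' = md S β c)) := by
      intro β
      by_cases h1 : β ∈ H
      · by_cases h2 : ∃ c₂, c₂ ∈ H ∧ β < c₂ ∧ S β ≠ S c₂ ∩ Iio β
        · obtain ⟨c, hc⟩ := hM β h1 h2
          exact ⟨c, fun _ _ => hc⟩
        · exact ⟨β, fun _ h2' => absurd h2' h2⟩
      · exact ⟨β, fun h1' => absurd h1' h1⟩
    choose cw hcw using hM'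
    set f : γ → γ := fun β => md S β (cw β) with hfdef
    have hreg : ∀ β ∈ {β | β ∈ H ∧ ∃ c, c ∈ H ∧ β < c ∧ S β ≠ S c ∩ Iio β}, f β < β := by
      rintro β ⟨hβH, hex⟩
      exact md_lt S hS (hcw β hβH hex).2.2.1
    obtain ⟨δ, hδ⟩ := fodor hN hBfstat f hreg
    -- pick β₀ and then a large c' in the fiber
    obtain ⟨a₀⟩ := hN.nonempty
    obtain ⟨β₀, hβ₀, _⟩ := statIn_unbounded hN hδ a₀
    obtain ⟨c', hc', hcwc'⟩ := statIn_unbounded hN hδ (max (cw β₀) β₀)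
    obtain ⟨⟨hβ₀H, hβ₀ex⟩, hfβ₀⟩ := hβ₀
    obtain ⟨⟨hc'H, hc'ex⟩, hfc'⟩ := hc'
    have hw₀ := hcw β₀ hβ₀H hβ₀ex
    have hwc' := hcw c' hc'H hc'ex
    have hev := hw₀.2.2.2 c' hc'H (le_of_lt (lt_of_le_of_lt (le_max_left _ _) hcwc'))
    -- directions
    have hd1 := hdir β₀ hβ₀H c' hc'H (lt_of_le_of_lt (le_max_right _ _) hcwc') hev.1
    have hd2 := hdir c' hc'H (cw c') hwc'.1 hwc'.2.1 hwc'.2.2.1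
    rw [hev.2] at hd1
    have hfeq : md S β₀ (cw β₀) = md S c' (cw c') := by
      have e1 : md S β₀ (cw β₀) = f β₀ := by rw [hfdef]
      have e2 : md S c' (cw c') = f c' := by rw [hfdef]
      rw [e1, e2, hfβ₀, hfc']
    rw [hfeq] at hd1
    cases cc with
    | true =>
      simp only [Bool.cond_true] at hd1 hd2
      exact hd2.2 hd1.1
    | false =>
      simp only [Bool.cond_false] at hd1 hd2
      exact hd1.2 hd2.1
  -- so the coherent part is stationary
  have hsub : H ⊆ {β | β ∈ H ∧ ∃ c, c ∈ H ∧ β < c ∧ S β ≠ S c ∩ Iio β} ∪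
      {β | β ∈ H ∧ ∀ c, c ∈ H → β < c → S β = S c ∩ Iio β} := by
    intro β hβ
    by_cases h : ∃ c, c ∈ H ∧ β < c ∧ S β ≠ S c ∩ Iio β
    · exact Or.inl ⟨hβ, h⟩
    · push_neg at h
      exact Or.inr ⟨hβ, h⟩
  have hBE : IsStatIn {β | β ∈ H ∧ ∀ c, c ∈ H → β < c → S β = S c ∩ Iio β} := by
    rcases statIn_union hN (statIn_mono hsub hH) with h | h
    · exact absurd h hBfnot
    · exact h
  refine ⟨(⋃ β ∈ {β | β ∈ H ∧ ∀ c, c ∈ H → β < c → S β = S c ∩ Iio β}, S β),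
    statIn_mono ?_ hBE⟩
  rintro a ⟨haH, hacoh⟩
  show (⋃ β ∈ _, S β) ∩ Iio a = S a
  ext ξ
  constructor
  · rintro ⟨hξU, hξa⟩
    simp only [mem_iUnion] at hξU
    obtain ⟨β, ⟨hβH, hβcoh⟩, hξSβ⟩ := hξU
    obtain ⟨c, hcH, hcgt⟩ := statIn_unbounded hN hH (max β a)
    have h1 := hβcoh c hcH (lt_of_le_of_lt (le_max_left _ _) hcgt)
    have h2 := hacoh c hcH (lt_of_le_of_lt (le_max_right _ _) hcgt)
    rw [h2]
    rw [h1] at hξSβ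
    exact ⟨hξSβ.1, hξa⟩
  · intro hξ
    refine ⟨?_, hS a hξ⟩
    simp only [mem_iUnion]
    exact ⟨a, ⟨haH, hacoh⟩, hξ⟩

end JK

/-! ### Machinery for an unsplittable stationary set -/

theorem us_fconst (hN : Nice γ) {x : Set γ} (hns : ∀ y, ¬ StatSplits y x)
    {T : Set γ} (hTx : T ⊆ x) (hT : IsStatIn T) (f : γ → γ) (hf : ∀ a ∈ T, f a < a) :
    ∃ c, IsStatIn {a | a ∈ T ∧ f a = c} ∧ ¬ IsStatIn {a | a ∈ T ∧ f a ≠ c} := by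
  obtain ⟨c₁, hc₁⟩ := fodor hN hT f hf
  refine ⟨c₁, hc₁, ?_⟩
  intro hR
  obtain ⟨c₂, hc₂⟩ := fodor hN hR (f := f) (fun a ha => hf a ha.1)
  obtain ⟨a₀⟩ := hN.nonempty
  obtain ⟨β, hβ, _⟩ := statIn_unbounded hN hc₂ a₀
  have hne : c₂ ≠ c₁ := by rw [← hβ.2]; exact hβ.1.2
  refine hns {a | a ∈ T ∧ f a = c₁} ⟨?_, ?_⟩
  · refine statIn_mono ?_ hc₁
    intro a ha
    exact ⟨hTx ha.1, ha⟩
  · refine statIn_mono ?_ hc₂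
    rintro a ⟨⟨haT, hane⟩, hac₂⟩
    exact ⟨hTx haT, fun hmem => hane hmem.2⟩

/-- the ladder-system argument: a stationary subset of an unsplittable set cannot carry a
uniformly short ladder system. -/
theorem ladder_split (hN : Nice γ) {x : Set γ} (hns : ∀ y, ¬ StatSplits y x)
    {T : Set γ} (hTx : T ⊆ x) (hT : IsStatIn T) {I : Type v}
    (hI : Cardinal.lift.{u} #I < Cardinal.lift.{v} #γ) (ℓ : γ → I → γ)
    (hreg : ∀ β ∈ T, ∀ i, ℓ β i < β)
    (hcof : ∀ β ∈ T, ∀ c, c < β → ∃ i, c ≤ ℓ β i)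
    (hlim : ∀ β ∈ T, ∀ b, b < β → ∃ d, b < d ∧ d < β) : False := by
  classical
  have hclaim : ∃ i : I, ∀ η : γ, IsStatIn {β | β ∈ T ∧ η < ℓ β i} := by
    by_contra hcon
    push_neg at hcon
    obtain ⟨ηf, hηf⟩ := Classical.axiomOfChoice hcon
    have hclubs : ∀ i : I, ∃ C, IsClubIn C ∧ {β | β ∈ T ∧ ηf i < ℓ β i} ∩ C = ∅ :=
      fun i => not_statIn_iff.mp (hηf i)
    choose C hC1 hC2 using hclubs
    have hCint : IsClubIn (⋂ i, C i) := clubIn_iInter hN hI hC1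
    have hrsmall : #(range ηf) < #γ := by
      have h1 : Cardinal.lift.{v} #(range ηf) ≤ Cardinal.lift.{u} #I :=
        Cardinal.mk_range_le_lift
      exact (Cardinal.lift_lt).mp (lt_of_le_of_lt h1 hI)
    obtain ⟨η, hη⟩ := hN.bdd _ hrsmall
    obtain ⟨β, hβT, hβmem⟩ := hT _ (clubIn_inter hN hCint (clubIn_Ioi hN η))
    have hβη : η < β := hβmem.2
    obtain ⟨d, hd1, hd2⟩ := hlim β hβT η hβη
    obtain ⟨i, hi⟩ := hcof β hβT d hd2
    have hsmall : ℓ β i ≤ ηf i := by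
      by_contra hgt
      push_neg at hgt
      have : β ∈ {β | β ∈ T ∧ ηf i < ℓ β i} ∩ C i :=
        ⟨⟨hβT, hgt⟩, mem_iInter.mp hβmem.1 i⟩
      rw [hC2 i] at this
      exact this
    exact absurd (lt_of_le_of_lt (le_trans hi hsmall) (lt_trans (hη _ ⟨i, rfl⟩) hd1))
      (lt_irrefl d)
  obtain ⟨i, hstat⟩ := hclaim
  obtain ⟨a₀⟩ := hN.nonempty
  have hsub0 : {β | β ∈ T ∧ a₀ < ℓ β i} ⊆ x := fun β hβ => hTx hβ.1
  obtain ⟨c₀, hc₀, _⟩ := us_fconst hN hns hsub0 (hstat a₀) (fun β => ℓ β i)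
    (fun β hβ => hreg β hβ.1 i)
  obtain ⟨b₀⟩ := hN.nonempty
  obtain ⟨βw, hβw, _⟩ := statIn_unbounded hN hc₀ b₀
  have hc₀gt : a₀ < c₀ := by rw [← hβw.2]; exact hβw.1.2
  have hsub1 : {β | β ∈ T ∧ c₀ < ℓ β i} ⊆ x := fun β hβ => hTx hβ.1
  obtain ⟨c₁, hc₁, _⟩ := us_fconst hN hns hsub1 (hstat c₀) (fun β => ℓ β i)
    (fun β hβ => hreg β hβ.1 i)
  obtain ⟨βw', hβw', _⟩ := statIn_unbounded hN hc₁ b₀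
  have hc₁gt : c₀ < c₁ := by rw [← hβw'.2]; exact hβw'.1.2
  refine hns {β | β ∈ T ∧ a₀ < ℓ β i ∧ ℓ β i = c₀} ⟨?_, ?_⟩
  · refine statIn_mono ?_ hc₀
    rintro β ⟨⟨hβT, hβgt⟩, hβeq⟩
    exact ⟨hTx hβT, hβT, hβgt, hβeq⟩
  · refine statIn_mono ?_ hc₁
    rintro β ⟨⟨hβT, hβgt⟩, hβeq⟩
    refine ⟨hTx hβT, ?_⟩
    rintro ⟨-, -, hβeq'⟩
    rw [hβeq'] at hβeq
    exact absurd (hβeq ▸ hc₁gt) (lt_irrefl c₀)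

/-- integration along the unsplittable ultrafilter: every sequence of local sets is
coherently captured by a single global set, off a nonstationary error. -/
theorem us_integrate (hN : Nice γ) {x : Set γ} (hns : ∀ y, ¬ StatSplits y x)
    (yfun : γ → Set γ) (hyfun : ∀ β, yfun β ⊆ Iio β) :
    ∃ Y : Set γ, ¬ IsStatIn (x \ {β | Y ∩ Iio β = yfun β}) := by
  classical
  set Y : Set γ := {ξ | ¬ IsStatIn (x \ {β | ξ < β ∧ ξ ∈ yfun β})} with hYdef
  refine ⟨Y, ?_⟩
  have hE : ∀ ξ : γ, ¬ IsStatIn (x \ {β | ξ < β → (ξ ∈ yfun β ↔ ξ ∈ Y)}) := by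
    intro ξ
    by_cases hξ : ξ ∈ Y
    · have hlarge : ¬ IsStatIn (x \ {β | ξ < β ∧ ξ ∈ yfun β}) := hξ
      intro hstat
      refine hlarge (statIn_mono ?_ hstat)
      rintro β ⟨hβx, hβn⟩
      refine ⟨hβx, ?_⟩
      rintro ⟨hξβ, hξy⟩
      exact hβn (fun _ => ⟨fun _ => hξ, fun _ => hξy⟩)
    · have hstatdiff : IsStatIn (x \ {β | ξ < β ∧ ξ ∈ yfun β}) := by
        by_contra hcon
        exact hξ hcon
      have hnotint : ¬ IsStatIn (x ∩ {β | ξ < β ∧ ξ ∈ yfun β}) := by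
        intro hint
        exact hns {β | ξ < β ∧ ξ ∈ yfun β} ⟨hint, hstatdiff⟩
      intro hstat
      refine hnotint (statIn_mono ?_ hstat)
      rintro β ⟨hβx, hβn⟩
      refine ⟨hβx, ?_⟩
      by_contra hβA
      refine hβn ?_
      intro hξβ
      constructor
      · intro hξy
        exact absurd ⟨hξβ, hξy⟩ hβA
      · intro hξY
        exact absurd hξY hξ
  have hsub : x \ {β | Y ∩ Iio β = yfun β} ⊆
      {a | ∃ ξ, ξ < a ∧ a ∈ x \ {β | ξ < β → (ξ ∈ yfun β ↔ ξ ∈ Y)}} := by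
    rintro β ⟨hβx, hβne⟩
    have hex : ∃ ξ, ξ < β ∧ ¬ (ξ ∈ yfun β ↔ ξ ∈ Y) := by
      by_contra hcon
      push_neg at hcon
      refine hβne ?_
      show Y ∩ Iio β = yfun β
      ext ξ
      constructor
      · rintro ⟨hξY, hξβ⟩
        exact (hcon ξ hξβ).mpr hξY
      · intro hξy
        exact ⟨(hcon ξ (hyfun β hξy)).mp hξy, hyfun β hξy⟩
    obtain ⟨ξ, hξβ, hξne⟩ := hex
    exact ⟨ξ, hξβ, hβx, fun himp => hξne (himp hξβ)⟩
  intro hstat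
  exact nonstat_diagUnion hN
    (N := fun ξ => x \ {β | ξ < β → (ξ ∈ yfun β ↔ ξ ∈ Y)}) hE (statIn_mono hsub hstat)

/-! ### Subtype transfer -/

theorem isLUB_subtype_iff (β : γ) {s : Set ↥(Iio β)} {z : ↥(Iio β)} :
    IsLUB s z ↔ IsLUB ((↑) '' s : Set γ) ↑z := by
  constructor
  · rintro ⟨hub, hlst⟩
    constructor
    · rintro c ⟨w, hw, rfl⟩
      exact Subtype.coe_le_coe.mpr (hub hw)
    · intro u hu
      rcases lt_or_ge u β with hu' | hu'
      · have hz : z ≤ ⟨u, hu'⟩ := hlst (fun w hw => Subtype.coe_le_coe.mp (hu ⟨w, hw, rfl⟩))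
        exact Subtype.coe_le_coe.mpr hz
      · exact le_trans z.2.le hu'
  · rintro ⟨hub, hlst⟩
    constructor
    · intro w hw
      exact Subtype.coe_le_coe.mp (hub ⟨w, hw, rfl⟩)
    · intro u hu
      refine Subtype.coe_le_coe.mp (hlst ?_)
      rintro c ⟨w, hw, rfl⟩
      exact Subtype.coe_le_coe.mpr (hu hw)

theorem clubIn_subtype_of_acc (β : γ) {C : Set γ} (hC : IsClubIn C) (hacc : β ∈ accPts C) :
    IsClubIn {z : ↥(Iio β) | (↑z : γ) ∈ C} := by
  constructor
  · intro s hs hne z hz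
    have himage : ((↑) '' s : Set γ) ⊆ C := by
      rintro c ⟨w, hw, rfl⟩
      exact hs hw
    exact hC.1 _ himage (hne.image _) _ ((isLUB_subtype_iff β).mp hz)
  · intro z
    obtain ⟨d, hd, h1, h2⟩ := hacc.2 (↑z) z.2
    exact ⟨⟨d, h2⟩, hd, h1⟩

/-! ### the non-reflecting case -/

theorem nonrefl_contra (hN : Nice γ) {x : Set γ} (hx : IsStatIn x)
    (hns : ∀ y, ¬ StatSplits y x) {T : Set γ} (hTx : T ⊆ x) (hT : IsStatIn T)
    (cb : γ → Set γ)
    (hsub : ∀ β ∈ T, cb β ⊆ Iio β)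
    (hunb : ∀ β ∈ T, ∀ b, b < β → ∃ d ∈ cb β, b < d)
    (hcl : ∀ β ∈ T, ∀ s ⊆ cb β, s.Nonempty → ∀ a, a < β → IsLUB s a → a ∈ cb β)
    (hdisj : ∀ β ∈ T, cb β ∩ x = ∅) : False := by
  classical
  have hGex : ∀ b β : γ, ∃ d : γ, β ∈ T ∧ b < β → d ∈ cb β ∧ b < d ∧
      (∀ e ∈ cb β, b < e → d ≤ e) := by
    intro b β
    by_cases h : β ∈ T ∧ b < β
    · have hne : (cb β ∩ Ioi b).Nonempty := by
        obtain ⟨d, hd1, hd2⟩ := hunb β h.1 b h.2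
        exact ⟨d, hd1, hd2⟩
      have hdmem := (IsWellFounded.wf (r := ((· < ·) : γ → γ → Prop))).min_mem _ hne
      refine ⟨(IsWellFounded.wf (r := ((· < ·) : γ → γ → Prop))).min _ hne,
        fun _ => ⟨hdmem.1, hdmem.2, ?_⟩⟩
      intro e he hbe
      exact not_lt.mp ((IsWellFounded.wf (r := ((· < ·) : γ → γ → Prop))).not_lt_min (cb β ∩ Ioi b)
        ⟨he, hbe⟩)
    · exact ⟨b, fun h' => absurd h' h⟩
  choose G hG using hGex
  have hfib : ∀ b : γ, ∃ c, IsStatIn {a | a ∈ T ∩ Ioi b ∧ G b a = c} ∧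
      ¬ IsStatIn {a | a ∈ T ∩ Ioi b ∧ G b a ≠ c} := by
    intro b
    refine us_fconst hN hns (T := T ∩ Ioi b) (fun a ha => hTx ha.1)
      (statIn_inter_club hN hT (clubIn_Ioi hN b)) (G b) ?_
    rintro a ⟨haT, hab⟩
    exact (hG b a ⟨haT, hab⟩).1 |> hsub a haT
  choose cs hcs1 hcs2 using hfib
  have hcgt : ∀ b, b < cs b := by
    intro b
    obtain ⟨a₀⟩ := hN.nonempty
    obtain ⟨βw, hβw, _⟩ := statIn_unbounded hN (hcs1 b) a₀
    have hlt := (hG b βw ⟨hβw.1.1, hβw.1.2⟩).2.1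
    rw [hβw.2] at hlt
    exact hlt
  obtain ⟨D, hD, hDdisj⟩ := not_statIn_iff.mp
    (nonstat_diagUnion hN (N := fun b => {a | a ∈ T ∩ Ioi b ∧ G b a ≠ cs b}) hcs2)
  have hRunb : ∀ a : γ, ∃ d ∈ range cs, a < d := fun a => ⟨cs a, ⟨a, rfl⟩, hcgt a⟩
  obtain ⟨α, hαx, hαacc⟩ := hx _ (clubIn_accPts hN hRunb)
  obtain ⟨β', hβ'TD, hαβ'⟩ := statIn_unbounded hN (statIn_inter_club hN hT hD) α
  have hβ'T := hβ'TD.1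
  have hβ'D := hβ'TD.2
  have hGval : ∀ b, b < α → G b β' = cs b := by
    intro b hbα
    have hbβ' : b < β' := lt_trans hbα hαβ'
    by_contra hne
    have hmem : β' ∈ {a | ∃ i, i < a ∧
        a ∈ {a | a ∈ T ∩ Ioi i ∧ G i a ≠ cs i}} ∩ D :=
      ⟨⟨b, hbβ', ⟨⟨hβ'T, hbβ'⟩, hne⟩⟩, hβ'D⟩
    rw [hDdisj] at hmem
    exact hmem
  have hin : ∀ b, b < α → cs b ∈ cb β' := by
    intro b hbα
    have h := hG b β' ⟨hβ'T, lt_trans hbα hαβ'⟩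
    rw [hGval b hbα] at h
    exact h.1
  have hslub : IsLUB (cb β' ∩ Iio α) α := by
    constructor
    · rintro d ⟨-, hd⟩
      exact hd.le
    · intro u hu
      by_contra hlt
      push_neg at hlt
      obtain ⟨d, hdR, hud, hdα⟩ := hαacc.2 u hlt
      obtain ⟨b, rfl⟩ := hdR
      have hbα : b < α := lt_trans (hcgt b) hdα
      exact absurd (hu ⟨hin b hbα, hdα⟩) (not_le.mpr hud)
  have hne2 : (cb β' ∩ Iio α).Nonempty := by
    obtain ⟨b0, hb0⟩ := hαacc.1
    obtain ⟨d, hdR, hud, hdα⟩ := hαacc.2 b0 hb0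
    obtain ⟨b, rfl⟩ := hdR
    exact ⟨cs b, hin b (lt_trans (hcgt b) hdα), hdα⟩
  have hαin := hcl β' hβ'T _ (fun d hd => hd.1) hne2 α hαβ' hslub
  have hbad : α ∈ cb β' ∩ x := ⟨hαin, hαx⟩
  rw [hdisj β' hβ'T] at hbad
  exact hbad

/-! ### helpers for the subtype Nice structure -/

theorem exists_surj_onto {s t : Set γ} (hle : #s ≤ #t) (hne : s.Nonempty) :
    ∃ g : ↥t → γ, (∀ i, g i ∈ s) ∧ ∀ d ∈ s, ∃ i, g i = d := by
  classical
  obtain ⟨e⟩ := (Cardinal.le_def ↥s ↥t).mp hle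
  obtain ⟨d₀, hd₀⟩ := hne
  refine ⟨fun i => if h : ∃ w : ↥s, e w = i then ↑h.choose else d₀, ?_, ?_⟩
  · intro i
    by_cases h : ∃ w : ↥s, e w = i
    · simp only [dif_pos h]
      exact h.choose.2
    · simp only [dif_neg h]
      exact hd₀
  · intro d hd
    refine ⟨e ⟨d, hd⟩, ?_⟩
    have h : ∃ w : ↥s, e w = e ⟨d, hd⟩ := ⟨⟨d, hd⟩, rfl⟩
    simp only [dif_pos h]
    have heq : h.choose = ⟨d, hd⟩ := e.injective h.choose_spec
    rw [heq]

theorem mk_Iio_subtype {β : γ} (z : ↥(Iio β)) :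
    #(Iio z : Set ↥(Iio β)) = #(Iio (↑z : γ)) := by
  refine Cardinal.mk_congr ⟨fun w => ⟨↑↑w, w.2⟩,
    fun d => ⟨⟨↑d, lt_trans d.2 z.2⟩, by exact d.2⟩, ?_, ?_⟩
  · intro w
    exact Subtype.ext (Subtype.ext rfl)
  · intro d
    exact Subtype.ext rfl

theorem nice_sub (hN : Nice γ) {β : γ} (hβlim : β ∈ accPts (univ : Set γ))
    (hTom : ¬ ∃ f : ℕ → γ, (∀ n, f n < β) ∧ ∀ c, c < β → ∃ n, c ≤ f n)
    (hSing : ¬ ∃ b, b < β ∧ ∃ s : Set γ, s ⊆ Iio β ∧ #s ≤ #(Iio b) ∧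
      ∀ c, c < β → ∃ d ∈ s, c ≤ d) :
    Nice ↥(Iio β) := by
  classical
  have hunc : ℵ₀ < #(Iio β) := by
    by_contra hcon
    push_neg at hcon
    have hcnt : (Iio β).Countable := countable_coe_iff.mp (mk_le_aleph0_iff.mp hcon)
    have hnemp : (Iio β).Nonempty := hβlim.1
    obtain ⟨f, hf⟩ := hcnt.exists_eq_range hnemp
    refine hTom ⟨f, ?_, ?_⟩
    · intro n
      have : f n ∈ Iio β := by rw [hf]; exact ⟨n, rfl⟩
      exact this
    · intro c hc
      have : c ∈ range f := by rw [← hf]; exact hc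
      obtain ⟨n, rfl⟩ := this
      exact ⟨n, le_rfl⟩
  have hseg : ∀ b, b < β → #(Iio b) < #(Iio β) := by
    intro b hb
    by_contra hcon
    push_neg at hcon
    exact hSing ⟨b, hb, Iio β, subset_rfl, hcon, fun c hc => ⟨c, hc, le_rfl⟩⟩
  refine ⟨?_, hunc, ?_⟩
  · -- bounded
    intro s hs
    by_contra hcon
    push_neg at hcon
    -- s is cofinal in β via its image
    have himg : #((↑) '' s : Set γ) = #s := Cardinal.mk_image_eq Subtype.coe_injective
    have hcof : ∀ c, c < β → ∃ d ∈ ((↑) '' s : Set γ), c ≤ d := by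
      intro c hc
      obtain ⟨w, hw, hwc⟩ := hcon ⟨c, hc⟩
      exact ⟨↑w, ⟨w, hw, rfl⟩, Subtype.coe_le_coe.mpr hwc⟩
    set s' : Set γ := (↑) '' s with hs'def
    have hs'sub : s' ⊆ Iio β := by
      rintro d ⟨w, hw, rfl⟩
      exact w.2
    have hs'small : #s' < #(Iio β) := by rw [himg]; exact hs
    by_cases hb : ∃ b, b < β ∧ #s' ≤ #(Iio b)
    · obtain ⟨b, hbβ, hble⟩ := hb
      exact hSing ⟨b, hbβ, s', hs'sub, hble, hcof⟩
    · push_neg at hb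
      -- all initial segments are smaller than s'
      have hall : ∀ b, b < β → #(Iio b) < #s' := hb
      -- injections from initial segments into s'
      have hinj : ∀ w : ↥s', ∃ E : γ → ↥s',
          ∀ d d' : γ, d ≤ ↑w → d' ≤ ↑w → E d = E d' → d = d' := by
        intro w
        obtain ⟨t', -, ht'1, ht'2⟩ := hβlim.2 ↑w (hs'sub w.2)
        have h1 : #(Iic (↑w : γ)) ≤ #(Iio t') := by
          refine Cardinal.mk_le_mk_of_subset ?_
          intro d hd
          exact lt_of_le_of_lt hd ht'1
        have h2 : #(Iic (↑w : γ)) ≤ #s' := le_of_lt (lt_of_le_of_lt h1 (hall t' ht'2))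
        obtain ⟨e⟩ := (Cardinal.le_def _ _).mp h2
        obtain ⟨w₀⟩ : Nonempty ↥s' := ⟨w⟩
        refine ⟨fun d => if h : d ≤ (↑w : γ) then e ⟨d, h⟩ else w₀, ?_⟩
        intro d d' hd hd' hE
        dsimp only at hE
        rw [dif_pos hd, dif_pos hd'] at hE
        have := e.injective hE
        exact congrArg Subtype.val this
      choose einj heinj using hinj
      have hpick : ∀ d : ↥(Iio β), ∃ w : ↥s', (↑d : γ) ≤ ↑w := by
        intro d
        obtain ⟨w, hw, hdw⟩ := hcof ↑d d.2
        exact ⟨⟨w, hw⟩, hdw⟩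
      choose pk hpk using hpick
      have hFinj : Function.Injective
          (fun d : ↥(Iio β) => ((pk d, einj (pk d) ↑d) : ↥s' × ↥s')) := by
        intro d d' heq
        have h1 : pk d = pk d' := congrArg Prod.fst heq
        have h2 := congrArg Prod.snd heq
        dsimp only at h2
        rw [h1] at h2
        have hd1 : (↑d : γ) ≤ ↑(pk d') := by rw [← h1]; exact hpk d
        have := heinj (pk d') ↑d ↑d' hd1 (hpk d') h2
        exact Subtype.ext this
      have hle := Cardinal.mk_le_of_injective hFinj
      have hprod : #(↥s' × ↥s') = #s' * #s' := by
        simp [Cardinal.mk_prod]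
      rw [hprod] at hle
      have hmax := le_trans hle (Cardinal.mul_le_max _ _)
      rcases max_cases (max #↥s' #↥s') ℵ₀ with ⟨hmc, _⟩ | ⟨hmc, _⟩ <;> rw [hmc] at hmax
      · rw [max_self] at hmax
        exact absurd (lt_of_le_of_lt hmax hs'small) (lt_irrefl _)
      · exact absurd (lt_of_le_of_lt hmax hunc) (lt_irrefl _)
  · -- seg
    intro z
    rw [mk_Iio_subtype z]
    exact hseg (↑z) z.2

/-! ### Solovay: every stationary set splits -/

theorem solovay (cd : Cardinal.{u}) :
    ∀ (γ : Type u) [LinearOrder γ] [WellFoundedLT γ], Nice γ → #γ = cd →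
      ∀ x : Set γ, IsStatIn x → ∃ y, StatSplits y x := by
  refine Cardinal.lt_wf.induction (C := fun cd => ∀ (γ : Type u) [LinearOrder γ]
    [WellFoundedLT γ], Nice γ → #γ = cd → ∀ x : Set γ, IsStatIn x → ∃ y, StatSplits y x)
    cd ?_
  clear cd
  intro cd IH γ _ _ hN hcd x hx
  by_contra hcon
  push_neg at hcon
  classical
  have hx₁ : IsStatIn (x ∩ accPts (univ : Set γ)) := statIn_inter_club hN hx (clubIn_lim hN)
  set x₁ : Set γ := x ∩ accPts (univ : Set γ) with hx₁def
  have hx₁x : x₁ ⊆ x := inter_subset_left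
  set Tom : Set γ := {β | β ∈ x₁ ∧ ∃ f : ℕ → γ, (∀ n, f n < β) ∧ ∀ c, c < β → ∃ n, c ≤ f n}
    with hTomdef
  set Sing : Set γ := {β | β ∈ x₁ ∧ ∃ b, b < β ∧ ∃ s : Set γ, s ⊆ Iio β ∧ #s ≤ #(Iio b) ∧
      ∀ c, c < β → ∃ d ∈ s, c ≤ d} with hSingdef
  set NR : Set γ := {β | β ∈ x₁ ∧ β ∉ Tom ∧ β ∉ Sing ∧
      ¬ IsStatIn {z : ↥(Iio β) | (↑z : γ) ∈ x}} with hNRdef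
  set RR : Set γ := {β | β ∈ x₁ ∧ β ∉ Tom ∧ β ∉ Sing ∧
      IsStatIn {z : ↥(Iio β) | (↑z : γ) ∈ x}} with hRRdef
  have hlim' : ∀ β ∈ x₁, ∀ b, b < β → ∃ d, b < d ∧ d < β := by
    intro β hβ b hb
    obtain ⟨d, -, h1, h2⟩ := hβ.2.2 b hb
    exact ⟨d, h1, h2⟩
  have hTomcase : ¬ IsStatIn Tom := by
    intro hTom
    have hch : ∀ β : γ, ∃ f : ℕ → γ, β ∈ Tom →
        (∀ n, f n < β) ∧ ∀ c, c < β → ∃ n, c ≤ f n := by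
      intro β
      by_cases h : β ∈ Tom
      · obtain ⟨-, f, hf⟩ := h
        exact ⟨f, fun _ => hf⟩
      · exact ⟨fun _ => β, fun h' => absurd h' h⟩
    choose lf hlf using hch
    have hI : Cardinal.lift.{u} #ℕ < Cardinal.lift.{0} #γ := by
      rw [Cardinal.mk_nat, Cardinal.lift_aleph0, Cardinal.lift_uzero]
      exact hN.unc
    exact ladder_split hN hcon (fun β hβ => hx₁x hβ.1) hTom hI lf
      (fun β hβ i => (hlf β hβ).1 i)
      (fun β hβ c hc => (hlf β hβ).2 c hc)
      (fun β hβ => hlim' β hβ.1)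
  have hSingcase : ¬ IsStatIn Sing := by
    intro hSing
    have hch : ∀ β : γ, ∃ b : γ, β ∈ Sing → b < β ∧ ∃ s : Set γ, s ⊆ Iio β ∧
        #s ≤ #(Iio b) ∧ ∀ c, c < β → ∃ d ∈ s, c ≤ d := by
      intro β
      by_cases h : β ∈ Sing
      · obtain ⟨-, b, hb⟩ := h
        exact ⟨b, fun _ => hb⟩
      · exact ⟨β, fun h' => absurd h' h⟩
    choose mb hmb using hch
    obtain ⟨bstar, hb1, -⟩ := us_fconst hN hcon (fun β hβ => hx₁x hβ.1) hSing mb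
      (fun β hβ => (hmb β hβ).1)
    have hch2 : ∀ β : γ, ∃ L : ↥(Iio bstar) → γ, (β ∈ Sing ∧ mb β = bstar) →
        (∀ i, L i < β) ∧ ∀ c, c < β → ∃ i, c ≤ L i := by
      intro β
      by_cases h : β ∈ Sing ∧ mb β = bstar
      · obtain ⟨hβS, hβb⟩ := h
        obtain ⟨hbβ, s, hssub, hsle, hscof⟩ := hmb β hβS
        rw [hβb] at hsle
        have hsne : s.Nonempty := by
          obtain ⟨b0, hb0⟩ := hβS.1.2.1
          obtain ⟨d, hd, -⟩ := hscof b0 hb0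
          exact ⟨d, hd⟩
        obtain ⟨g, hg1, hg2⟩ := exists_surj_onto hsle hsne
        refine ⟨g, fun _ => ⟨?_, ?_⟩⟩
        · intro i
          exact hssub (hg1 i)
        · intro c hc
          obtain ⟨d, hd, hcd⟩ := hscof c hc
          obtain ⟨i, hi⟩ := hg2 d hd
          exact ⟨i, hi ▸ hcd⟩
      · exact ⟨fun _ => β, fun h' => absurd h' h⟩
    choose L hL using hch2
    have hI : Cardinal.lift.{u} #(↥(Iio bstar)) < Cardinal.lift.{u} #γ :=
      Cardinal.lift_lt.mpr (hN.seg bstar)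
    exact ladder_split hN hcon (T := {a | a ∈ Sing ∧ mb a = bstar})
      (fun β hβ => hx₁x hβ.1.1) hb1 hI L
      (fun β hβ i => (hL β hβ).1 i)
      (fun β hβ c hc => (hL β hβ).2 c hc)
      (fun β hβ => hlim' β hβ.1.1)
  have hNRcase : ¬ IsStatIn NR := by
    intro hNR
    have hch : ∀ β : γ, ∃ c' : Set ↥(Iio β), β ∈ NR →
        IsClubIn c' ∧ {z : ↥(Iio β) | (↑z : γ) ∈ x} ∩ c' = ∅ := by
      intro β
      by_cases h : β ∈ NR
      · obtain ⟨-, -, -, hnst⟩ := h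
        obtain ⟨c', hc'1, hc'2⟩ := not_statIn_iff.mp hnst
        exact ⟨c', fun _ => ⟨hc'1, hc'2⟩⟩
      · exact ⟨∅, fun h' => absurd h' h⟩
    choose cb' hcb' using hch
    refine nonrefl_contra hN hx hcon (fun β hβ => hx₁x hβ.1) hNR
      (fun β => (↑) '' (cb' β)) ?_ ?_ ?_ ?_
    · rintro β hβ d ⟨z, hz, rfl⟩
      exact z.2
    · intro β hβ b hb
      obtain ⟨z, hz, hbz⟩ := (hcb' β hβ).1.2 ⟨b, hb⟩
      exact ⟨↑z, ⟨z, hz, rfl⟩, hbz⟩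
    · intro β hβ s hssub hsne a haβ hlub
      set s' : Set ↥(Iio β) := {z | (↑z : γ) ∈ s} with hs'def
      have hseq : s = (↑) '' s' := by
        ext d
        constructor
        · intro hd
          obtain ⟨z, -, rfl⟩ := hssub hd
          exact ⟨z, hd, rfl⟩
        · rintro ⟨z, hz, rfl⟩
          exact hz
      have hlub' : IsLUB s' (⟨a, haβ⟩ : ↥(Iio β)) := by
        rw [isLUB_subtype_iff]
        rw [← hseq]
        exact hlub
      have hs'sub : s' ⊆ cb' β := by
        intro z hz
        obtain ⟨w, hw, hwz⟩ := hssub hz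
        rwa [← Subtype.coe_injective hwz]
      have hs'ne : s'.Nonempty := by
        obtain ⟨d, hd⟩ := hsne
        obtain ⟨z, -, rfl⟩ := hssub hd
        exact ⟨z, hd⟩
      have hmem := (hcb' β hβ).1.1 s' hs'sub hs'ne _ hlub'
      exact ⟨⟨a, haβ⟩, hmem, rfl⟩
    · intro β hβ
      ext d
      simp only [mem_inter_iff, mem_empty_iff_false, iff_false, not_and]
      rintro ⟨z, hz, rfl⟩ hdx
      have : z ∈ {z : ↥(Iio β) | (↑z : γ) ∈ x} ∩ cb' β := ⟨hdx, hz⟩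
      rw [(hcb' β hβ).2] at this
      exact this
  have hRR : IsStatIn RR := by
    have hsplit : x₁ ⊆ Tom ∪ (Sing ∪ (NR ∪ RR)) := by
      intro β hβ
      by_cases h1 : β ∈ Tom
      · exact Or.inl h1
      by_cases h2 : β ∈ Sing
      · exact Or.inr (Or.inl h2)
      by_cases h3 : IsStatIn {z : ↥(Iio β) | (↑z : γ) ∈ x}
      · exact Or.inr (Or.inr (Or.inr ⟨hβ, h1, h2, h3⟩))
      · exact Or.inr (Or.inr (Or.inl ⟨hβ, h1, h2, h3⟩))
    rcases statIn_union hN (statIn_mono hsplit hx₁) with h | h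
    · exact absurd h hTomcase
    rcases statIn_union hN h with h | h
    · exact absurd h hSingcase
    rcases statIn_union hN h with h | h
    · exact absurd h hNRcase
    exact h
  -- now use IH to split below each β ∈ RR
  have hch : ∀ β : γ, ∃ yb : Set γ, β ∈ RR → yb ⊆ Iio β ∧
      IsStatIn ({z : ↥(Iio β) | (↑z : γ) ∈ x} ∩ {z | (↑z : γ) ∈ yb}) ∧
      IsStatIn ({z : ↥(Iio β) | (↑z : γ) ∈ x} \ {z | (↑z : γ) ∈ yb}) := by
    intro β
    by_cases h : β ∈ RR
    · obtain ⟨hβx₁, hβT, hβS, hβst⟩ := h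
      have hNs : Nice ↥(Iio β) := nice_sub hN hβx₁.2 (fun hc => hβT ⟨hβx₁, hc⟩)
          (fun hc => hβS ⟨hβx₁, hc⟩)
      have hcard : #(↥(Iio β)) < cd := hcd ▸ hN.seg β
      obtain ⟨y', hy'⟩ := IH _ hcard (↥(Iio β)) hNs rfl _ hβst
      have hpull : {z : ↥(Iio β) | (↑z : γ) ∈ ((↑) '' y' : Set γ)} = y' := by
        ext z
        constructor
        · rintro ⟨w, hw, hwz⟩
          rwa [← Subtype.coe_injective hwz]
        · intro hz
          exact ⟨z, hz, rfl⟩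
      refine ⟨(↑) '' y', fun _ => ⟨?_, ?_, ?_⟩⟩
      · rintro d ⟨z, -, rfl⟩
        exact z.2
      · rw [hpull]
        exact hy'.1
      · rw [hpull]
        exact hy'.2
    · exact ⟨∅, fun h' => absurd h' h⟩
  choose yb hyb using hch
  set yfun : γ → Set γ := fun β => if β ∈ RR then yb β else ∅ with hyfundef
  have hyfunsub : ∀ β, yfun β ⊆ Iio β := by
    intro β
    by_cases h : β ∈ RR
    · rw [hyfundef]
      simp only [if_pos h]
      exact (hyb β h).1
    · rw [hyfundef]
      simp only [if_neg h]
      exact empty_subset _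
  obtain ⟨Y, hY⟩ := us_integrate hN hcon yfun hyfunsub
  obtain ⟨D, hD, hDdisj⟩ := not_statIn_iff.mp hY
  -- decide x ∩ Y
  by_cases hxY : IsStatIn (x ∩ Y)
  · have hnz : ¬ IsStatIn (x \ Y) := fun h => hcon Y ⟨hxY, h⟩
    obtain ⟨C, hC, hCdisj⟩ := not_statIn_iff.mp hnz
    obtain ⟨β, hβRR, hβmem⟩ := hRR _ (clubIn_inter hN (clubIn_accPts hN
      (fun a => (hC.2 a))) hD)
    have hβE : Y ∩ Iio β = yfun β := by
      by_contra hne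
      have hmem : β ∈ (x \ {β | Y ∩ Iio β = yfun β}) ∩ D :=
        ⟨⟨hx₁x hβRR.1, hne⟩, hβmem.2⟩
      rw [hDdisj] at hmem
      exact hmem
    have hCβ : IsClubIn {z : ↥(Iio β) | (↑z : γ) ∈ C} :=
      clubIn_subtype_of_acc β hC hβmem.1
    obtain ⟨z, hz1, hz2⟩ := (hyb β hβRR).2.2 _ hCβ
    have hYval : yfun β = yb β := if_pos hβRR
    have hzY : (↑z : γ) ∉ Y := by
      intro hzY
      have hmem : (↑z : γ) ∈ Y ∩ Iio β := ⟨hzY, z.2⟩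
      rw [hβE, hYval] at hmem
      exact hz1.2 hmem
    have hmem : (↑z : γ) ∈ (x \ Y) ∩ C := ⟨⟨hz1.1, hzY⟩, hz2⟩
    rw [hCdisj] at hmem
    exact hmem
  · obtain ⟨C, hC, hCdisj⟩ := not_statIn_iff.mp hxY
    obtain ⟨β, hβRR, hβmem⟩ := hRR _ (clubIn_inter hN (clubIn_accPts hN
      (fun a => (hC.2 a))) hD)
    have hβE : Y ∩ Iio β = yfun β := by
      by_contra hne
      have hmem : β ∈ (x \ {β | Y ∩ Iio β = yfun β}) ∩ D :=
        ⟨⟨hx₁x hβRR.1, hne⟩, hβmem.2⟩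
      rw [hDdisj] at hmem
      exact hmem
    have hCβ : IsClubIn {z : ↥(Iio β) | (↑z : γ) ∈ C} :=
      clubIn_subtype_of_acc β hC hβmem.1
    obtain ⟨z, hz1, hz2⟩ := (hyb β hβRR).2.1 _ hCβ
    have hYval : yfun β = yb β := if_pos hβRR
    have hzY : (↑z : γ) ∈ Y := by
      have hmem : (↑z : γ) ∈ yfun β := by
        rw [hYval]
        exact hz1.2
      rw [← hβE] at hmem
      exact hmem.1
    have hmem : (↑z : γ) ∈ (x ∩ Y) ∩ C := ⟨⟨hz1.1, hzY⟩, hz2⟩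
    rw [hCdisj] at hmem
    exact hmem

/-! ### Final assembly -/

theorem exists_surj_onto' {A B : Type u} {s : Set B} (hle : #s ≤ #A) (hne : s.Nonempty) :
    ∃ g : A → B, (∀ i, g i ∈ s) ∧ ∀ d ∈ s, ∃ i, g i = d := by
  classical
  obtain ⟨e⟩ := (Cardinal.le_def ↥s A).mp hle
  obtain ⟨d₀, hd₀⟩ := hne
  refine ⟨fun i => if h : ∃ w : ↥s, e w = i then ↑h.choose else d₀, ?_, ?_⟩
  · intro i
    by_cases h : ∃ w : ↥s, e w = i
    · simp only [dif_pos h]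
      exact h.choose.2
    · simp only [dif_neg h]
      exact hd₀
  · intro d hd
    refine ⟨e ⟨d, hd⟩, ?_⟩
    have h : ∃ w : ↥s, e w = e ⟨d, hd⟩ := ⟨⟨d, hd⟩, rfl⟩
    simp only [dif_pos h]
    have heq : h.choose = ⟨d, hd⟩ := e.injective h.choose_spec
    rw [heq]

theorem nice_of_regular {α : Type u} [LinearOrder α] [WellFoundedLT α]
    (hreg : (#α).IsRegular) (hunc : ℵ₀ < #α) (hinit : ∀ a : α, #(Iio a) < #α) :
    Nice α := by
  refine ⟨?_, hunc, hinit⟩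
  intro s hs
  by_contra hcon
  push_neg at hcon
  have hch : ∀ a : α, ∃ c : ↥s, a ≤ ↑c := by
    intro a
    obtain ⟨c, hc, hac⟩ := hcon a
    exact ⟨⟨c, hc⟩, hac⟩
  have hIic : ∀ c : ↥s, #(Iic (↑c : α)) < #α := by
    intro c
    have heq : (Iic (↑c : α)) = insert (↑c : α) (Iio ↑c) := by
      ext d
      simp [le_iff_lt_or_eq, or_comm]
    rw [heq]
    exact lt_of_le_of_lt Cardinal.mk_insert_le
      (Cardinal.add_lt_of_lt hunc.le (hinit _) (lt_trans Cardinal.one_lt_aleph0 hunc))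
  have hcover : (univ : Set α) ⊆ ⋃ c : ↥s, Iic (↑c : α) := by
    intro a _
    obtain ⟨c, hc⟩ := hch a
    exact mem_iUnion.mpr ⟨c, hc⟩
  have h1 : #α ≤ #(⋃ c : ↥s, Iic (↑c : α)) := by
    rw [← Cardinal.mk_univ]
    exact Cardinal.mk_le_mk_of_subset hcover
  have h2 := le_trans h1 Cardinal.mk_iUnion_le_sum_mk
  have h3 : Cardinal.sum (fun c : ↥s => #(Iic (↑c : α))) < #α :=
    Cardinal.sum_lt_of_isRegular hreg hs hIic
  exact absurd (lt_of_le_of_lt h2 h3) (lt_irrefl _)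

/-- Direction A: from a coloring without stationary homogeneous set we extract a small
splitting family. -/
theorem dirA {α : Type u} [LinearOrder α] [WellFoundedLT α] (hN : Nice α)
    (hni : ¬ Ineffable α) : statSplittingNumber α ≤ #α := by
  classical
  rw [Ineffable] at hni
  push_neg at hni
  obtain ⟨f, hf⟩ := hni
  set yb : α → Set α := fun b => {a | b < a ∧ f b a = true} with hybdef
  set Sfam : Set (Set α) := {y | (∃ b, y = yb b) ∧ IsStatIn y} with hSdef
  have hsplit : ∀ x : Set α, IsStatIn x → ∃ y ∈ Sfam, StatSplits y x := by
    intro x hx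
    by_contra hno
    push_neg at hno
    set A : Set α := {b | ¬ IsStatIn (x \ yb b)} with hAdef
    have hcl : ∀ b : α, ∃ C, IsClubIn C ∧
        ∀ j, j ∈ x → j ∈ C → b < j → (f b j = true ↔ b ∈ A) := by
      intro b
      by_cases hb : b ∈ A
      · obtain ⟨C, hC, hCdisj⟩ := not_statIn_iff.mp hb
        refine ⟨C, hC, ?_⟩
        intro j hjx hjC hbj
        have hjy : j ∈ yb b := by
          by_contra hjy
          have hmem : j ∈ (x \ yb b) ∩ C := ⟨⟨hjx, hjy⟩, hjC⟩
          rw [hCdisj] at hmem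
          exact hmem
        exact ⟨fun _ => hb, fun _ => hjy.2⟩
      · have hbst : IsStatIn (x \ yb b) := by
          by_contra hc
          exact hb hc
        have hnotint : ¬ IsStatIn (x ∩ yb b) := by
          by_cases hyst : IsStatIn (yb b)
          · intro hint
            exact hno (yb b) ⟨⟨b, rfl⟩, hyst⟩ ⟨hint, hbst⟩
          · intro hint
            exact hyst (statIn_mono inter_subset_right hint)
        obtain ⟨C, hC, hCdisj⟩ := not_statIn_iff.mp hnotint
        refine ⟨C, hC, ?_⟩
        intro j hjx hjC hbj
        constructor
        · intro hfbj
          exfalso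
          have hmem : j ∈ (x ∩ yb b) ∩ C := ⟨⟨hjx, hbj, hfbj⟩, hjC⟩
          rw [hCdisj] at hmem
          exact hmem
        · intro hbA
          exact absurd hbA hb
    choose C hC1 hC2 using hcl
    have hD := clubIn_diagInter hN hC1
    have hxD : IsStatIn (x ∩ diagInter C) := statIn_inter_club hN hx hD
    have hsplit2 : x ∩ diagInter C ⊆ ((x ∩ diagInter C) ∩ A) ∪ ((x ∩ diagInter C) \ A) := by
      intro a ha
      by_cases h : a ∈ A
      · exact Or.inl ⟨ha, h⟩
      · exact Or.inr ⟨ha, h⟩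
    have hkey : ∀ (i j : α), i ∈ x ∩ diagInter C → j ∈ x ∩ diagInter C → i < j →
        (f i j = true ↔ i ∈ A) := by
      intro i j hi hj hij
      exact hC2 i j hj.1 (hj.2 i hij) hij
    rcases statIn_union hN (statIn_mono hsplit2 hxD) with hstat | hstat
    · obtain ⟨i, hi, j, hj, hij, hfij⟩ := hf _ hstat true
      exact hfij ((hkey i j hi.1 hj.1 hij).mpr hi.2)
    · obtain ⟨i, hi, j, hj, hij, hfij⟩ := hf _ hstat false
      have : f i j ≠ true := fun h => hi.2 ((hkey i j hi.1 hj.1 hij).mp h)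
      exact hfij (by simpa using this)
  have hmem : statSplittingNumber α ≤ #Sfam := by
    refine csInf_le (OrderBot.bddBelow _) ?_
    exact ⟨Sfam, fun y hy => hy.2, hsplit, rfl⟩
  refine le_trans hmem ?_
  have hsub : Sfam ⊆ range yb := by
    rintro y ⟨⟨b, rfl⟩, -⟩
    exact ⟨b, rfl⟩
  exact le_trans (Cardinal.mk_le_mk_of_subset hsub) Cardinal.mk_range_le

/-- Direction B. -/
theorem dirB {α : Type u} [LinearOrder α] [WellFoundedLT α] (hN : Nice α)
    (hIneff : Ineffable α) : #α < statSplittingNumber α := by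
  classical
  have hsetne : {c : Cardinal | ∃ S : Set (Set α), (∀ y ∈ S, IsStatIn y) ∧
      (∀ x : Set α, IsStatIn x → ∃ y ∈ S, StatSplits y x) ∧ c = #S}.Nonempty := by
    refine ⟨#{y : Set α | IsStatIn y}, {y | IsStatIn y}, fun y hy => hy, ?_, rfl⟩
    intro x hx
    obtain ⟨y, hy⟩ := solovay #α α hN rfl x hx
    exact ⟨y, statIn_mono inter_subset_right hy.1, hy⟩
  have hmem := csInf_mem hsetne
  rw [statSplittingNumber]
  obtain ⟨S, hS1, hS2, hSeq⟩ := hmem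
  rw [hSeq]
  by_contra hle
  push_neg at hle
  have hSne : S.Nonempty := by
    obtain ⟨y, hy, -⟩ := hS2 univ (statIn_univ hN)
    exact ⟨y, hy⟩
  obtain ⟨g, hg1, hg2⟩ := exists_surj_onto' hle hSne
  set Sq : α → Set α := fun a => {i | i < a ∧ a ∈ g i} with hSqdef
  have hSqsub : ∀ a, Sq a ⊆ Iio a := fun a i hi => hi.1
  obtain ⟨A, hA⟩ := seq_ineffable hN hIneff Sq hSqsub
  obtain ⟨y, hyS, hysp⟩ := hS2 _ hA
  obtain ⟨i, rfl⟩ := hg2 y hyS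
  by_cases hiA : i ∈ A
  · refine absurd hysp.2 (not_statIn_bounded hN (b := i) ?_)
    rintro a ⟨ha, hay⟩
    by_contra hia
    push_neg at hia
    have hmem2 : i ∈ A ∩ Iio a := ⟨hiA, hia⟩
    rw [ha] at hmem2
    exact hay hmem2.2
  · refine absurd hysp.1 (not_statIn_bounded hN (b := i) ?_)
    rintro a ⟨ha, hay⟩
    by_contra hia
    push_neg at hia
    have hmem2 : i ∈ Sq a := ⟨hia, hay⟩
    rw [← ha] at hmem2
    exact hiA hmem2.1

end StatSplit

/-- For a regular uncountable cardinal `κ`, the stationary splitting number satisfies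
`s^cl_κ > κ` if and only if `κ` is ineffable. Here `κ` is represented as a well-ordered
type `α` of regular uncountable cardinality all of whose proper initial segments are of
size `< #α`. -/
theorem statSplittingNumber_gt_iff_ineffable {α : Type*} [LinearOrder α] [WellFoundedLT α]
    (hreg : (#α).IsRegular) (hunc : ℵ₀ < #α)
    (hinit : ∀ a : α, #(Set.Iio a) < #α) :
    #α < statSplittingNumber α ↔ Ineffable α := by
  have hN : StatSplit.Nice α := StatSplit.nice_of_regular hreg hunc hinit
  constructor
  · intro hlt
    by_contra hni
    exact absurd (StatSplit.dirA hN hni) (not_le.mpr hlt)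
  · intro hIneff
    exact StatSplit.dirB hN hIneff
end

section
/- Let κ be a regular uncountable cardinal. Then the stationary splitting number s^cl_κ is strictly greater than κ if and only if κ has the normal* filter property. -/
open Set Cardinal

/-- `F` is a uniform filter on `κ`: a filter all of whose members have cardinality `κ`,
containing all co-bounded sets. -/
def IsUniformFilter {α : Type*} [LinearOrder α] (F : Set (Set α)) : Prop :=
  Set.univ ∈ F ∧ (∀ x ∈ F, ∀ y : Set α, x ⊆ y → y ∈ F) ∧
    (∀ x ∈ F, ∀ y ∈ F, x ∩ y ∈ F) ∧ (∀ x ∈ F, #x = #α) ∧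
    ∀ x : Set α, BddAbove xᶜ → x ∈ F

/-- `F` is normal*: the diagonal intersection of every `κ`-sequence of members of `F` is
stationary. -/
def IsNormalStar {α : Type*} [LinearOrder α] (F : Set (Set α)) : Prop :=
  ∀ f : α → Set α, (∀ i, f i ∈ F) → IsStatIn {k : α | ∀ i < k, k ∈ f i}

/-- `F` measures `X`: for every `x ∈ X` either `x ∈ F` or `κ \ x ∈ F`. -/
def Measures {α : Type*} (F X : Set (Set α)) : Prop :=
  ∀ x ∈ X, x ∈ F ∨ xᶜ ∈ F

/-- `κ` has the normal* filter property: every `X ⊆ P(κ)` of size at most `κ` is measured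
by some normal* uniform filter. -/
def NormalStarFilterProperty (α : Type*) [LinearOrder α] : Prop :=
  ∀ X : Set (Set α), #X ≤ #α →
    ∃ F : Set (Set α), IsUniformFilter F ∧ IsNormalStar F ∧ Measures F X


section Basics
variable {α : Type u} [LinearOrder α] [WellFoundedLT α]

open Classical in
noncomputable def wmin (s : Set α) (hs : s.Nonempty) : α :=
  (IsWellFounded.wf (r := ((· < ·) : α → α → Prop))).min s hs

lemma wmin_mem (s : Set α) (hs : s.Nonempty) : wmin s hs ∈ s :=
  WellFounded.min_mem _ s hs

lemma wmin_le (s : Set α) (hs : s.Nonempty) {x : α} (hx : x ∈ s) : wmin s hs ≤ x :=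
  not_lt.1 (WellFounded.not_lt_min _ s hx)

lemma exists_isLUB {s : Set α} (h : s.Nonempty) (hb : BddAbove s) : ∃ b, IsLUB s b := by
  refine ⟨wmin (upperBounds s) hb, wmin_mem _ hb, fun u hu => wmin_le _ hb hu⟩

lemma isLUB_iff' {s : Set α} {b : α} :
    IsLUB s b ↔ b ∈ upperBounds s ∧ ∀ x < b, ∃ y ∈ s, x < y := by
  constructor
  · rintro ⟨h1, h2⟩
    refine ⟨h1, fun x hx => ?_⟩
    by_contra h
    push_neg at h
    exact absurd (h2 fun y hy => h y hy) (not_le.2 hx)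
  · rintro ⟨h1, h2⟩
    refine ⟨h1, fun u hu => ?_⟩
    by_contra h
    obtain ⟨y, hy, hy2⟩ := h2 u (not_le.1 h)
    exact absurd (hu hy) (not_le.2 hy2)

variable (hreg : (#α).IsRegular) (hunc : ℵ₀ < #α) (hinit : ∀ a : α, #(Set.Iio a) < #α)

include hreg hinit in
lemma bddAbove_of_card_lt {s : Set α} (h : #s < #α) : BddAbove s := by
  by_contra hb
  have hcov : (Set.univ : Set α) ⊆ ⋃ b ∈ s, Set.Iio b := by
    intro a _
    simp only [Set.mem_iUnion, Set.mem_Iio]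
    by_contra hc
    push_neg at hc
    exact hb ⟨a, fun x hx => hc x hx⟩
  have : #α ≤ #(⋃ b ∈ s, Set.Iio b) := by
    simpa using Cardinal.mk_le_mk_of_subset hcov
  have hlt : #(⋃ b ∈ s, Set.Iio b) < #α :=
    (Cardinal.card_biUnion_lt_iff_forall_of_isRegular hreg h).2 fun a _ => hinit a
  exact absurd (this.trans_lt hlt) (lt_irrefl _)

include hreg hunc hinit in
lemma exists_gt' (u : α) : ∃ b, u < b := by
  by_contra hc
  push_neg at hc
  have h1 : (Set.univ : Set α) ⊆ Set.insert u (Set.Iio u) := by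
    intro a _
    rcases lt_or_eq_of_le (hc a) with h | h
    · exact Set.mem_insert_of_mem _ h
    · exact h ▸ Set.mem_insert _ _
  have h2 : #α ≤ #(Set.Iio u) + 1 := by
    calc #α = #(Set.univ : Set α) := Cardinal.mk_univ.symm
    _ ≤ #(Set.insert u (Set.Iio u)) := Cardinal.mk_le_mk_of_subset h1
    _ ≤ #(Set.Iio u) + 1 := Cardinal.mk_insert_le
  have h3 : #(Set.Iio u) + 1 < #α :=
    Cardinal.add_lt_of_lt hreg.aleph0_le (hinit u) (lt_trans Cardinal.one_lt_aleph0 hunc)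
  exact absurd (h2.trans_lt h3) (lt_irrefl _)

include hreg hunc hinit in
lemma exists_forall_lt_of_card_lt {s : Set α} (h : #s < #α) : ∃ b, ∀ x ∈ s, x < b := by
  obtain ⟨u, hu⟩ := bddAbove_of_card_lt hreg hinit h
  obtain ⟨b, hb⟩ := exists_gt' hreg hunc hinit u
  exact ⟨b, fun x hx => lt_of_le_of_lt (hu hx) hb⟩

end Basics

section Clubs
variable {α : Type u} [LinearOrder α] [WellFoundedLT α]
variable (hreg : (#α).IsRegular) (hunc : ℵ₀ < #α) (hinit : ∀ a : α, #(Set.Iio a) < #α)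

include hreg hunc hinit in
lemma card_Iic_lt (a : α) : #(Set.Iic a) < #α := by
  have h1 : #(Set.Iic a) ≤ #(Set.Iio a) + 1 := by
    have : Set.Iic a ⊆ Set.insert a (Set.Iio a) := by
      intro x hx
      rcases lt_or_eq_of_le (hx : x ≤ a) with h | h
      · exact Set.mem_insert_of_mem _ h
      · exact h ▸ Set.mem_insert _ _
    exact (Cardinal.mk_le_mk_of_subset this).trans Cardinal.mk_insert_le
  exact h1.trans_lt (Cardinal.add_lt_of_lt hreg.aleph0_le (hinit a)
    (lt_trans Cardinal.one_lt_aleph0 hunc))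

include hreg hunc hinit in
lemma exists_isLUB_of_card_lt {s : Set α} (hne : s.Nonempty) (h : #s < #α) :
    ∃ b, IsLUB s b :=
  exists_isLUB hne (bddAbove_of_card_lt hreg hinit h)

lemma IsClubIn.inter_nonempty_Ioi {c : Set α} (hc : IsClubIn c) (a : α) :
    ∃ b ∈ c, a < b := hc.2 a

include hreg hunc hinit in
/-- intersection of fewer than `κ` clubs is a club -/
lemma isClubIn_iInter {ι : Type u} (hι : #ι < #α) {c : ι → Set α}
    (hc : ∀ i, IsClubIn (c i)) : IsClubIn (⋂ i, c i) := by
  constructor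
  · intro t ht htne b hb
    rw [Set.mem_iInter]
    intro i
    exact (hc i).1 t (fun x hx => Set.mem_iInter.1 (ht hx) i) htne b hb
  · intro a
    have hstep : ∀ i : ι, ∀ x : α, ∃ y ∈ c i, x < y := fun i x => (hc i).2 x
    choose nxt hnxt1 hnxt2 using hstep
    have key : ∀ x : α, ∃ y, x < y ∧ ∀ i : ι, nxt i x < y := by
      intro x
      have hr : #(Set.range (fun i : ι => nxt i x)) < #α :=
        Cardinal.mk_range_le.trans_lt hι
      obtain ⟨b1, hb1⟩ := exists_forall_lt_of_card_lt hreg hunc hinit hr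
      obtain ⟨b2, hb2⟩ := exists_gt' hreg hunc hinit (max x b1)
      exact ⟨b2, (le_max_left x b1).trans_lt hb2,
        fun i => (hb1 _ (Set.mem_range_self i)).trans_le ((le_max_right x b1).trans hb2.le)⟩
    choose stp hstp1 hstp2 using key
    set f : ℕ → α := fun n => Nat.rec a (fun _ x => stp x) n with hf
    have hfs : ∀ n, f (n + 1) = stp (f n) := fun n => rfl
    have hmono : StrictMono f := strictMono_nat_of_lt_succ (fun n => by
      rw [hfs]; exact hstp1 (f n))
    have hrc : #(Set.range f) < #α :=
      (Set.countable_range f).le_aleph0.trans_lt hunc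
    obtain ⟨b, hb⟩ := exists_isLUB_of_card_lt hreg hunc hinit (Set.range_nonempty f) hrc
    have hbchar := isLUB_iff'.1 hb
    refine ⟨b, ?_, ?_⟩
    · rw [Set.mem_iInter]
      intro i
      refine (hc i).1 (Set.range (fun n => nxt i (f n)))
        (fun x hx => by obtain ⟨n, rfl⟩ := hx; exact hnxt1 i (f n)) ⟨_, 0, rfl⟩ b ?_
      rw [isLUB_iff']
      constructor
      · rintro x ⟨n, rfl⟩
        calc nxt i (f n) ≤ f (n + 1) := by rw [hfs]; exact (hstp2 (f n) i).le
        _ ≤ b := hbchar.1 ⟨n + 1, rfl⟩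
      · intro x hx
        obtain ⟨y, ⟨n, rfl⟩, hy2⟩ := hbchar.2 x hx
        exact ⟨nxt i (f n), ⟨n, rfl⟩, hy2.trans (hnxt2 i (f n))⟩
    · have : f 0 < f 1 := hmono Nat.zero_lt_one
      exact this.trans_le (hbchar.1 ⟨1, rfl⟩)

include hreg hunc hinit in
/-- the diagonal intersection of `κ` clubs is a club -/
lemma isClubIn_diagInter {c : α → Set α} (hc : ∀ i, IsClubIn (c i)) :
    IsClubIn {k : α | ∀ i < k, k ∈ c i} := by
  constructor
  · intro t ht htne b hb
    intro i hi
    have hchar := isLUB_iff'.1 hb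
    obtain ⟨y, hy, hy2⟩ := hchar.2 i hi
    refine (hc i).1 (t ∩ Set.Ioi i) (fun x hx => ht hx.1 i hx.2) ⟨y, hy, hy2⟩ b ?_
    rw [isLUB_iff']
    refine ⟨fun x hx => hchar.1 hx.1, fun x hx => ?_⟩
    obtain ⟨z, hz, hz2⟩ := hchar.2 (max x i) (max_lt hx hi)
    exact ⟨z, ⟨hz, (le_max_right x i).trans_lt hz2⟩, (le_max_left x i).trans_lt hz2⟩
  · intro a
    have key : ∀ x : α, ∃ y, x < y ∧ ∀ i ≤ x, y ∈ c i := by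
      intro x
      have hclub : IsClubIn (⋂ i : Set.Iic x, c i) :=
        isClubIn_iInter hreg hunc hinit (card_Iic_lt hreg hunc hinit x) (fun i => hc i)
      obtain ⟨y, hy1, hy2⟩ := hclub.2 x
      exact ⟨y, hy2, fun i hi => Set.mem_iInter.1 hy1 ⟨i, hi⟩⟩
    choose stp hstp1 hstp2 using key
    set f : ℕ → α := fun n => Nat.rec a (fun _ x => stp x) n with hf
    have hfs : ∀ n, f (n + 1) = stp (f n) := fun n => rfl
    have hmono : StrictMono f := strictMono_nat_of_lt_succ (fun n => by
      rw [hfs]; exact hstp1 (f n))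
    have hrc : #(Set.range f) < #α :=
      (Set.countable_range f).le_aleph0.trans_lt hunc
    obtain ⟨b, hb⟩ := exists_isLUB_of_card_lt hreg hunc hinit (Set.range_nonempty f) hrc
    have hbchar := isLUB_iff'.1 hb
    refine ⟨b, ?_, ?_⟩
    · intro i hi
      obtain ⟨y, ⟨n, rfl⟩, hy2⟩ := hbchar.2 i hi
      -- b is the LUB of {f (n+1+m) : m} all of which are in c i
      refine (hc i).1 (Set.range (fun m => f (n + 1 + m)))
        (fun x hx => ?_) ⟨_, 0, rfl⟩ b ?_
      · obtain ⟨m, rfl⟩ := hx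
        have hile : i ≤ f (n + m) := (hy2.le.trans (hmono.le_iff_le.2 (Nat.le_add_right n m)))
        have h2 : f (n + m + 1) ∈ c i := by
          rw [hfs]; exact hstp2 (f (n + m)) i hile
        show f (n + 1 + m) ∈ c i
        have he : n + 1 + m = n + m + 1 := by omega
        rw [he]; exact h2
      · rw [isLUB_iff']
        constructor
        · rintro x ⟨m, rfl⟩
          exact hbchar.1 ⟨n + 1 + m, rfl⟩
        · intro x hx
          obtain ⟨z, ⟨m, rfl⟩, hz2⟩ := hbchar.2 x hx
          refine ⟨f (n + 1 + (m + 1)), ⟨m + 1, rfl⟩, hz2.trans_le ?_⟩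
          show f m ≤ f (n + 1 + (m + 1))
          exact hmono.monotone (show m ≤ n + 1 + (m + 1) by omega)
    · have : f 0 < f 1 := hmono Nat.zero_lt_one
      exact this.trans_le (hbchar.1 ⟨1, rfl⟩)

end Clubs

section Stat
variable {α : Type u} [LinearOrder α] [WellFoundedLT α]
variable (hreg : (#α).IsRegular) (hunc : ℵ₀ < #α) (hinit : ∀ a : α, #(Set.Iio a) < #α)

include hreg hunc hinit in
lemma isClubIn_Ioi (a : α) : IsClubIn (Set.Ioi a) := by
  constructor
  · rintro s hs ⟨y, hy⟩ b hb
    exact lt_of_lt_of_le (hs hy) (hb.1 hy)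
  · intro x
    obtain ⟨b, hb⟩ := exists_gt' hreg hunc hinit (max a x)
    exact ⟨b, (le_max_left a x).trans_lt hb, (le_max_right a x).trans_lt hb⟩

include hreg hunc hinit in
lemma isClubIn_univ : IsClubIn (Set.univ : Set α) := by
  refine ⟨fun _ _ _ _ _ => Set.mem_univ _, fun a => ?_⟩
  obtain ⟨b, hb⟩ := exists_gt' hreg hunc hinit a
  exact ⟨b, Set.mem_univ b, hb⟩

lemma IsStatIn.mono {x y : Set α} (hxy : x ⊆ y) (hx : IsStatIn x) : IsStatIn y :=
  fun c hc => (hx c hc).imp (fun k hk => ⟨hxy hk.1, hk.2⟩)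

lemma not_isStatIn_iff {x : Set α} :
    ¬ IsStatIn x ↔ ∃ c : Set α, IsClubIn c ∧ x ∩ c = ∅ := by
  rw [IsStatIn]
  push_neg
  simp only [Set.not_nonempty_iff_eq_empty]

include hreg hunc hinit in
lemma not_isStatIn_of_bddAbove {x : Set α} (h : BddAbove x) : ¬ IsStatIn x := by
  obtain ⟨u, hu⟩ := h
  rw [not_isStatIn_iff]
  refine ⟨Set.Ioi u, isClubIn_Ioi hreg hunc hinit u, ?_⟩
  ext k
  simp only [Set.mem_inter_iff, Set.mem_Ioi, Set.mem_empty_iff_false, iff_false, not_and]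
  exact fun hk => not_lt.2 (hu hk)

include hreg hunc hinit in
lemma IsStatIn.card_eq {x : Set α} (h : IsStatIn x) : #x = #α := by
  refine le_antisymm (Cardinal.mk_set_le x) (not_lt.1 ?_)
  intro hlt
  exact not_isStatIn_of_bddAbove hreg hunc hinit (bddAbove_of_card_lt hreg hinit hlt) h

include hreg hunc hinit in
lemma IsClubIn.inter {c1 c2 : Set α} (hc1 : IsClubIn c1) (hc2 : IsClubIn c2) :
    IsClubIn (c1 ∩ c2) := by
  have hι : #(↥({c1, c2} : Set (Set α))) < #α :=
    ((Set.finite_singleton c2).insert c1).lt_aleph0.trans hunc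
  have h := isClubIn_iInter hreg hunc hinit hι
    (c := fun i : ↥({c1, c2} : Set (Set α)) => (i : Set α)) ?_
  · have he : (⋂ i : ↥({c1, c2} : Set (Set α)), (i : Set α)) = c1 ∩ c2 := by
      ext k
      simp [Set.mem_iInter]
    rwa [he] at h
  · rintro ⟨i, hi⟩
    show IsClubIn i
    rcases hi with h | h
    · rwa [h]
    · rw [Set.mem_singleton_iff] at h
      rwa [h]

include hreg hunc hinit in
lemma not_isStatIn_union {x y : Set α} (hx : ¬ IsStatIn x) (hy : ¬ IsStatIn y) :
    ¬ IsStatIn (x ∪ y) := by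
  rw [not_isStatIn_iff] at hx hy ⊢
  obtain ⟨c1, hc1, he1⟩ := hx
  obtain ⟨c2, hc2, he2⟩ := hy
  refine ⟨c1 ∩ c2, hc1.inter hreg hunc hinit hc2, ?_⟩
  rw [Set.eq_empty_iff_forall_notMem]
  rintro k ⟨hk1 | hk1, hk2, hk3⟩
  · exact Set.eq_empty_iff_forall_notMem.1 he1 k ⟨hk1, hk2⟩
  · exact Set.eq_empty_iff_forall_notMem.1 he2 k ⟨hk1, hk3⟩

include hreg hunc hinit in
lemma IsStatIn.inter_club {x c : Set α} (hx : IsStatIn x) (hc : IsClubIn c) :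
    IsStatIn (x ∩ c) := by
  intro d hd
  obtain ⟨k, hk1, hk2⟩ := hx (c ∩ d) (hc.inter hreg hunc hinit hd)
  exact ⟨k, ⟨hk1, hk2.1⟩, hk2.2⟩

include hreg hunc hinit in
/-- Fodor's lemma -/
lemma fodor {S : Set α} (hS : IsStatIn S) {f : α → α} (hf : ∀ a ∈ S, f a < a) :
    ∃ i, IsStatIn (S ∩ f ⁻¹' {i}) := by
  by_contra hcon
  push_neg at hcon
  have : ∀ i, ∃ c : Set α, IsClubIn c ∧ (S ∩ f ⁻¹' {i}) ∩ c = ∅ := by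
    intro i
    exact not_isStatIn_iff.1 (hcon i)
  choose c hc1 hc2 using this
  obtain ⟨k, hk1, hk2⟩ := hS _ (isClubIn_diagInter hreg hunc hinit hc1)
  have hk3 : k ∈ c (f k) := hk2 (f k) (hf k hk1)
  have : k ∈ (S ∩ f ⁻¹' {f k}) ∩ c (f k) := ⟨⟨hk1, rfl⟩, hk3⟩
  rw [hc2] at this
  exact this

end Stat

section Forward
variable {α : Type u} [LinearOrder α] [WellFoundedLT α]
variable (hreg : (#α).IsRegular) (hunc : ℵ₀ < #α) (hinit : ∀ a : α, #(Set.Iio a) < #α)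

include hreg hunc hinit in
lemma forward_dir
    (hsplit : ∀ S : Set (Set α), (∀ y ∈ S, IsStatIn y) → #S ≤ #α →
      ∃ x : Set α, IsStatIn x ∧ ∀ y ∈ S, ¬ StatSplits y x) :
    NormalStarFilterProperty α := by
  haveI : Nonempty α := by
    rw [← Cardinal.mk_ne_zero_iff]
    intro h
    rw [h] at hunc
    exact absurd hunc (by simp)
  intro X hX
  set S := {y ∈ X | IsStatIn y} with hSdef
  have hS1 : ∀ y ∈ S, IsStatIn y := fun y hy => hy.2
  have hScard : #S ≤ #α := (Cardinal.mk_le_mk_of_subset (Set.sep_subset _ _)).trans hX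
  obtain ⟨x, hx, hxs⟩ := hsplit S hS1 hScard
  refine ⟨{z | ¬ IsStatIn (x \ z)}, ⟨?_, ?_, ?_, ?_, ?_⟩, ?_, ?_⟩
  · -- univ
    show ¬ IsStatIn (x \ Set.univ)
    rw [Set.diff_univ]
    exact not_isStatIn_of_bddAbove hreg hunc hinit bddAbove_empty
  · -- upward closed
    intro z hz y hzy
    show ¬ IsStatIn (x \ y)
    exact fun h => hz (h.mono (Set.diff_subset_diff_right hzy))
  · -- intersections
    intro z hz y hy
    show ¬ IsStatIn (x \ (z ∩ y))
    rw [Set.diff_inter]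
    exact not_isStatIn_union hreg hunc hinit hz hy
  · -- cardinality
    intro z hz
    have hstat : IsStatIn (x ∩ z) := by
      by_contra h
      have := not_isStatIn_union hreg hunc hinit h hz
      rw [Set.inter_union_diff] at this
      exact this hx
    exact (hstat.mono Set.inter_subset_right).card_eq hreg hunc hinit
  · -- co-bounded
    intro z hbz
    show ¬ IsStatIn (x \ z)
    exact fun h => not_isStatIn_of_bddAbove hreg hunc hinit
      (hbz.mono (fun k hk => hk.2)) h
  · -- normal*
    intro f hf
    have : ∀ i, ∃ c : Set α, IsClubIn c ∧ (x \ f i) ∩ c = ∅ := fun i =>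
      not_isStatIn_iff.1 (hf i)
    choose c hc1 hc2 using this
    have hD := isClubIn_diagInter hreg hunc hinit hc1
    refine (hx.inter_club hreg hunc hinit hD).mono ?_
    rintro k ⟨hk1, hk2⟩ i hik
    by_contra hk3
    exact Set.eq_empty_iff_forall_notMem.1 (hc2 i) k ⟨⟨hk1, hk3⟩, hk2 i hik⟩
  · -- measures
    intro z hzX
    by_cases h : IsStatIn (x \ z)
    · right
      show ¬ IsStatIn (x \ zᶜ)
      rw [Set.diff_compl]
      intro hstat
      have hzS : z ∈ S := ⟨hzX, hstat.mono Set.inter_subset_right⟩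
      exact hxs z hzS ⟨hstat, h⟩
    · left; exact h

end Forward

section Solovay
variable {α : Type u} [LinearOrder α] [WellFoundedLT α]

/-- limit points of a set -/
def limpts (C : Set α) : Set α := {a | (C ∩ Set.Iio a).Nonempty ∧ IsLUB (C ∩ Set.Iio a) a}

/-- relative club below `a` -/
def ClubBelow (a : α) (c : Set α) : Prop :=
  c ⊆ Set.Iio a ∧ (∀ s ⊆ c, s.Nonempty → ∀ b < a, IsLUB s b → b ∈ c) ∧
    ∀ x < a, ∃ y ∈ c, x < y

/-- relative stationarity below `a` -/
def StatBelow (a : α) (x : Set α) : Prop := ∀ c, ClubBelow a c → (x ∩ c).Nonempty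

/-- the set of "cofinality witnesses" of `a`: indices `i` such that some map defined on
`Iio i` has range cofinal in `Iio a` -/
def CofSet (a : α) : Set α := {i | ∃ f : α → α, ∀ y < a, ∃ x < i, y < f x ∧ f x < a}

lemma lim_mem_cofSet {a : α} (ha : (Set.Iio a).Nonempty ∧ IsLUB (Set.Iio a) a) :
    a ∈ CofSet a := by
  refine ⟨id, fun y hy => ?_⟩
  obtain ⟨z, hz, hz2⟩ := (isLUB_iff'.1 ha.2).2 y hy
  exact ⟨z, hz, hz2, hz⟩

variable (hreg : (#α).IsRegular) (hunc : ℵ₀ < #α) (hinit : ∀ a : α, #(Set.Iio a) < #α)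

include hunc in
lemma nonempty_alpha : Nonempty α := by
  rw [← Cardinal.mk_ne_zero_iff]
  intro h
  rw [h] at hunc
  exact absurd hunc (by simp)

lemma limpts_subset {C : Set α} (hC : IsClubIn C) : limpts C ⊆ C := by
  rintro a ⟨h1, h2⟩
  exact hC.1 _ Set.inter_subset_left h1 a h2

include hreg hunc hinit in
lemma isClubIn_limpts {C : Set α} (hC : IsClubIn C) : IsClubIn (limpts C) := by
  constructor
  · rintro s hs hsne b hb
    have hchar := isLUB_iff'.1 hb
    have hne : (C ∩ Set.Iio b).Nonempty := by
      obtain ⟨y, hy⟩ := hsne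
      obtain ⟨z, hz, hz2⟩ := (hs hy).1
      rcases lt_or_eq_of_le (hchar.1 hy) with h | h
      · exact ⟨z, hz, hz2.trans h⟩
      · exact ⟨z, hz, h ▸ hz2⟩
    refine ⟨hne, isLUB_iff'.2 ⟨fun z hz => hz.2.le, fun z hz => ?_⟩⟩
    obtain ⟨y, hy, hy2⟩ := hchar.2 z hz
    rcases lt_or_eq_of_le (hchar.1 hy) with h | h
    ·
      -- y ∈ limpts C: C ∩ Iio y nonempty with LUB y > z: pick w ∈ C∩Iio y with z < w
      obtain ⟨w, hw, hw2⟩ := (isLUB_iff'.1 (hs hy).2).2 z hy2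
      exact ⟨w, ⟨hw.1, hw.2.trans h⟩, hw2⟩
    · -- y = b: b ∈ s ⊆ limpts C
      obtain ⟨w, hw, hw2⟩ := (isLUB_iff'.1 (hs hy).2).2 z (h ▸ hy2 : z < y)
      exact ⟨w, ⟨hw.1, h ▸ hw.2⟩, hw2⟩
  · intro a
    -- build an increasing ω-chain in C above a
    have hstep : ∀ z : α, ∃ y ∈ C, z < y := hC.2
    choose nxt hnxt1 hnxt2 using hstep
    set f : ℕ → α := fun n => Nat.rec (nxt a) (fun _ z => nxt z) n with hf
    have hfs : ∀ n, f (n + 1) = nxt (f n) := fun n => rfl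
    have hmono : StrictMono f := strictMono_nat_of_lt_succ (fun n => by
      rw [hfs]; exact hnxt2 (f n))
    have hfC : ∀ n, f n ∈ C := by
      intro n
      cases n with
      | zero => exact hnxt1 a
      | succ m => rw [hfs]; exact hnxt1 (f m)
    have hrc : #(Set.range f) < #α := (Set.countable_range f).le_aleph0.trans_lt hunc
    obtain ⟨b, hb⟩ := exists_isLUB_of_card_lt hreg hunc hinit (Set.range_nonempty f) hrc
    have hbchar := isLUB_iff'.1 hb
    have hfb : ∀ n, f n < b := fun n =>
      (hmono (Nat.lt_succ_self n)).trans_le (hbchar.1 ⟨n + 1, rfl⟩)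
    refine ⟨b, ⟨⟨f 0, hfC 0, hfb 0⟩, isLUB_iff'.2 ⟨fun z hz => hz.2.le, fun z hz => ?_⟩⟩, ?_⟩
    · obtain ⟨y, ⟨n, rfl⟩, hy2⟩ := hbchar.2 z hz
      exact ⟨f n, ⟨hfC n, hfb n⟩, hy2⟩
    · calc a < f 0 := hnxt2 a
        _ < b := hfb 0

include hreg hunc hinit in
lemma split_of_regressive {x S : Set α} (hSx : S ⊆ x) {g : α → α}
    (hg : ∀ a ∈ S, g a < a) (hub : ∀ η, IsStatIn {a | a ∈ S ∧ η < g a}) :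
    ∃ y, IsStatIn y ∧ StatSplits y x := by
  haveI := nonempty_alpha (α := α) hunc
  have hS : IsStatIn S := (hub (Classical.arbitrary α)).mono (fun a ha => ha.1)
  obtain ⟨γ1, hT1⟩ := fodor hreg hunc hinit hS hg
  have hS' : IsStatIn {a | a ∈ S ∧ γ1 < g a} := hub γ1
  obtain ⟨γ2, hT2⟩ := fodor hreg hunc hinit hS' (fun a ha => hg a ha.1)
  obtain ⟨a2, ⟨⟨ha2S, ha2γ⟩, ha2g⟩, -⟩ := hT2 _ (isClubIn_univ hreg hunc hinit)
  have hγne : γ1 ≠ γ2 := by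
    have : g a2 = γ2 := ha2g
    exact fun h => absurd (h ▸ ha2γ) (this ▸ lt_irrefl _)
  refine ⟨S ∩ g ⁻¹' {γ1}, hT1, hT1.mono (fun a ha => ⟨hSx ha.1, ha⟩), ?_⟩
  refine hT2.mono ?_
  rintro a ⟨⟨haS, haγ⟩, hag⟩
  refine ⟨hSx haS, ?_⟩
  rintro ⟨-, hmem⟩
  have h1 : g a = γ1 := hmem
  have h2 : g a = γ2 := hag
  exact hγne (h1 ▸ h2)

include hreg hunc hinit in
lemma split_of_uniform_cof {x W3 : Set α} (hW3x : W3 ⊆ x) (hW3 : IsStatIn W3) {lam : α}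
    (hcof : ∀ a ∈ W3, lam ∈ CofSet a) : ∃ y, IsStatIn y ∧ StatSplits y x := by
  classical
  haveI := nonempty_alpha (α := α) hunc
  have hch : ∀ a, ∃ f : α → α, a ∈ W3 → ∀ y < a, ∃ x' < lam, y < f x' ∧ f x' < a := by
    intro a
    by_cases h : a ∈ W3
    · obtain ⟨f, hf⟩ := hcof a h
      exact ⟨f, fun _ => hf⟩
    · exact ⟨id, fun h' => absurd h' h⟩
  choose F hF using hch
  have claim : ∃ ξ, ξ < lam ∧ ∀ η, IsStatIn {a | a ∈ W3 ∧ η < F a ξ ∧ F a ξ < a} := by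
    by_contra hcon
    push_neg at hcon
    have hch2 : ∀ ξ : α, ∃ η, ∃ c : Set α, IsClubIn c ∧
        (ξ < lam → {a | a ∈ W3 ∧ η < F a ξ ∧ F a ξ < a} ∩ c = ∅) := by
      intro ξ
      by_cases hξ : ξ < lam
      · obtain ⟨η, hη⟩ := hcon ξ hξ
        obtain ⟨c, hc1, hc2⟩ := not_isStatIn_iff.1 hη
        exact ⟨η, c, hc1, fun _ => hc2⟩
      · exact ⟨Classical.arbitrary α, Set.univ, isClubIn_univ hreg hunc hinit,
          fun h => absurd h hξ⟩
    choose η c hc1 hc2 using hch2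
    have hC : IsClubIn (⋂ ξ : ↥(Set.Iio lam), c ξ) :=
      isClubIn_iInter hreg hunc hinit (hinit lam) (fun ξ => hc1 ξ)
    have hrng : #(Set.range (fun ξ : ↥(Set.Iio lam) => η ↑ξ)) < #α :=
      Cardinal.mk_range_le.trans_lt (hinit lam)
    obtain ⟨ηs, hηs⟩ := exists_forall_lt_of_card_lt hreg hunc hinit hrng
    obtain ⟨a, haW3, haC, haη⟩ : ∃ a, a ∈ W3 ∧ a ∈ (⋂ ξ : ↥(Set.Iio lam), c ξ) ∧ ηs < a := by
      obtain ⟨a, ha1, ha2, ha3⟩ := hW3 _ (hC.inter hreg hunc hinit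
        (isClubIn_Ioi hreg hunc hinit ηs))
      exact ⟨a, ha1, ha2, ha3⟩
    obtain ⟨ξw, hξw, h1, h2⟩ := hF a haW3 ηs haη
    have hmem : a ∈ {a | a ∈ W3 ∧ η ξw < F a ξw ∧ F a ξw < a} ∩ c ξw := by
      refine ⟨⟨haW3, ?_, h2⟩, Set.mem_iInter.1 haC ⟨ξw, hξw⟩⟩
      exact (hηs _ (Set.mem_range_self (⟨ξw, hξw⟩ : ↥(Set.Iio lam)))).trans h1
    rw [hc2 ξw hξw] at hmem
    exact hmem
  obtain ⟨ξ, -, hξ⟩ := claim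
  refine split_of_regressive hreg hunc hinit
    (show {a | a ∈ W3 ∧ F a ξ < a} ⊆ x from fun a ha => hW3x ha.1)
    (g := fun a => F a ξ) (fun a ha => ha.2) (fun η => (hξ η).mono ?_)
  rintro a ⟨h1, h2, h3⟩
  exact ⟨⟨h1, h3⟩, h2⟩


open Classical in
/-- transfinite enumeration of a set `c` by repeatedly taking minima of what's left -/
noncomputable def enumSet (c : Set α) : α → α :=
  (IsWellFounded.wf (α := α) (r := (· < ·))).fix
    (fun ξ ih => if h : (c \ {y | ∃ ζ, ∃ hζ : ζ < ξ, ih ζ hζ = y}).Nonempty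
      then wmin _ h else ξ)

open Classical in
lemma enumSet_eq (c : Set α) (ξ : α) : enumSet c ξ =
    if h : (c \ {y | ∃ ζ, ∃ _ : ζ < ξ, enumSet c ζ = y}).Nonempty
      then wmin _ h else ξ := by
  rw [enumSet, WellFounded.fix_eq]

section Enum
variable {β : α} {c : Set α} (hsub : c ⊆ Set.Iio β)
  (hunbd : ∀ z < β, ∃ y ∈ c, z < y) (hcof : ∀ i ∈ CofSet β, β ≤ i)

include hsub hunbd hcof in
lemma enum_nonempty {ξ : α} (hξ : ξ < β) :
    (c \ {y | ∃ ζ, ∃ _ : ζ < ξ, enumSet c ζ = y}).Nonempty := by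
  by_contra h
  rw [Set.not_nonempty_iff_eq_empty, Set.diff_eq_empty] at h
  have : ξ ∈ CofSet β := by
    refine ⟨enumSet c, fun y hy => ?_⟩
    obtain ⟨y', hy'c, hy'⟩ := hunbd y hy
    obtain ⟨ζ, hζ, hζ2⟩ := h hy'c
    exact ⟨ζ, hζ, hζ2 ▸ hy', hζ2 ▸ hsub hy'c⟩
  exact absurd (hcof ξ this) (not_le.2 hξ)

include hsub hunbd hcof in
lemma enum_mem {ξ : α} (hξ : ξ < β) :
    enumSet c ξ ∈ c ∧ enumSet c ξ ∉ {y | ∃ ζ, ∃ _ : ζ < ξ, enumSet c ζ = y} := by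
  have h := enum_nonempty hsub hunbd hcof hξ
  rw [enumSet_eq c ξ, dif_pos h]
  exact wmin_mem _ h

include hsub hunbd hcof in
lemma enum_lt_of_lt {ζ ξ : α} (hζξ : ζ < ξ) (hξ : ξ < β) :
    enumSet c ζ < enumSet c ξ := by
  have hζβ : ζ < β := hζξ.trans hξ
  have hξm := enum_mem hsub hunbd hcof hξ
  have hle : enumSet c ζ ≤ enumSet c ξ := by
    rw [enumSet_eq c ζ, dif_pos (enum_nonempty hsub hunbd hcof hζβ)]
    refine wmin_le _ _ ⟨hξm.1, ?_⟩
    rintro ⟨ζ', hζ', heq⟩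
    exact hξm.2 ⟨ζ', hζ'.trans hζξ, heq⟩
  rcases lt_or_eq_of_le hle with h | h
  · exact h
  · exact absurd (⟨ζ, hζξ, h⟩ : ∃ ζ', ∃ _ : ζ' < ξ, enumSet c ζ' = enumSet c ξ) hξm.2

include hsub hunbd hcof in
lemma enum_ge : ∀ {ξ : α}, ξ < β → ξ ≤ enumSet c ξ := by
  have key : ∀ ξ : α, ξ < β → ξ ≤ enumSet c ξ := by
    intro ξ
    induction ξ using (IsWellFounded.wf (α := α) (r := (· < ·))).induction with
    | _ x ih =>
      intro hxβ
      by_contra h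
      push_neg at h
      have hxc : enumSet c x ∈ c := (enum_mem hsub hunbd hcof hxβ).1
      have h1 : enumSet c x ≤ enumSet c (enumSet c x) := ih _ h (hsub hxc)
      have h2 : enumSet c (enumSet c x) < enumSet c x :=
        enum_lt_of_lt hsub hunbd hcof h hxβ
      exact absurd (h1.trans_lt h2) (lt_irrefl _)
  exact fun {ξ} h => key ξ h

end Enum

/-- inside a point of "uncountable cofinality", limit points of a club are unbounded -/
lemma limpts_unbounded_below {a0 : α} {C : Set α} (ha0 : a0 ∈ limpts C)
    (hω : ∀ f : ℕ → α, (∀ n, f n < a0) → ¬ IsLUB (Set.range f) a0)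
    {x0 : α} (hx0 : x0 < a0) : ∃ b, b ∈ limpts C ∧ x0 < b ∧ b < a0 := by
  obtain ⟨-, hlub⟩ := ha0
  have hchar := isLUB_iff'.1 hlub
  have hstep : ∀ z, z < a0 → ∃ y, (y ∈ C ∧ y < a0) ∧ z < y := by
    intro z hz
    obtain ⟨y, hy, hy2⟩ := hchar.2 z hz
    exact ⟨y, ⟨hy.1, hy.2⟩, hy2⟩
  choose nxt hnxt1 hnxt2 using hstep
  set T := {p : α // p ∈ C ∧ p < a0} with hT
  have stp : T → T := fun p => ⟨nxt p.1 p.2.2, hnxt1 p.1 p.2.2⟩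
  set stp' : T → T := fun p => ⟨nxt p.1 p.2.2, hnxt1 p.1 p.2.2⟩ with hstp
  set start : T := ⟨nxt x0 hx0, hnxt1 x0 hx0⟩ with hstart
  set f : ℕ → T := fun n => Nat.rec start (fun _ p => stp' p) n with hf
  have hfs : ∀ n, f (n + 1) = stp' (f n) := fun n => rfl
  set g : ℕ → α := fun n => (f n).1 with hg
  have hglt : ∀ n, g n < a0 := fun n => (f n).2.2
  have hgC : ∀ n, g n ∈ C := fun n => (f n).2.1
  have hgmono : StrictMono g := strictMono_nat_of_lt_succ (fun n => by
    show g n < (f (n + 1)).1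
    rw [hfs]
    exact hnxt2 (f n).1 (f n).2.2)
  obtain ⟨b, hb⟩ := exists_isLUB (Set.range_nonempty g)
    ⟨a0, by rintro y ⟨n, rfl⟩; exact (hglt n).le⟩
  have hbchar := isLUB_iff'.1 hb
  have hgb : ∀ n, g n < b := fun n =>
    (hgmono (Nat.lt_succ_self n)).trans_le (hbchar.1 ⟨n + 1, rfl⟩)
  have hba : b < a0 := by
    rcases lt_or_eq_of_le (hb.2 (by rintro y ⟨n, rfl⟩; exact (hglt n).le)) with h | h
    · exact h
    · exact absurd (h ▸ hb) (hω g hglt)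
  have hx0b : x0 < b := by
    calc x0 < g 0 := hnxt2 x0 hx0
    _ < b := hgb 0
  refine ⟨b, ⟨⟨g 0, Set.mem_inter (hgC 0) (hgb 0)⟩,
    isLUB_iff'.2 ⟨fun z hz => hz.2.le, ?_⟩⟩, hx0b, hba⟩
  intro z hz
  obtain ⟨y, ⟨n, rfl⟩, hy2⟩ := hbchar.2 z hz
  exact ⟨g n, Set.mem_inter (hgC n) (hgb n), hy2⟩

include hreg hunc hinit in
lemma case2_split {x R : Set α} (hRx : R ⊆ x) (hR : IsStatIn R)
    (hRlim : ∀ a ∈ R, (Set.Iio a).Nonempty ∧ IsLUB (Set.Iio a) a)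
    (hRcof : ∀ a ∈ R, ∀ i ∈ CofSet a, a ≤ i)
    (hRω : ∀ a ∈ R, ∀ f : ℕ → α, (∀ n, f n < a) → ¬ IsLUB (Set.range f) a) :
    ∃ y, IsStatIn y ∧ StatSplits y x := by
  classical
  haveI := nonempty_alpha (α := α) hunc
  set R' := {a | a ∈ R ∧ ∃ c, ClubBelow a c ∧ R ∩ c = ∅} with hR'def
  -- Step 1 : R' is stationary
  have hR' : IsStatIn R' := by
    intro C hC
    have hlpC := isClubIn_limpts hreg hunc hinit hC
    have hne : (R ∩ limpts C).Nonempty := hR _ hlpC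
    set a0 := wmin _ hne with ha0def
    have ha0 := wmin_mem _ hne
    refine ⟨a0, ⟨ha0.1, limpts C ∩ Set.Iio a0, ⟨fun y hy => hy.2, ?_, ?_⟩, ?_⟩,
      limpts_subset hC ha0.2⟩
    · -- closed
      intro s hs hsne b hb hlub
      exact ⟨hlpC.1 s (fun y hy => (hs hy).1) hsne b hlub, hb⟩
    · -- unbounded
      intro z hz
      obtain ⟨b, hb1, hb2, hb3⟩ := limpts_unbounded_below ha0.2 (hRω a0 ha0.1) hz
      exact ⟨b, ⟨hb1, hb3⟩, hb2⟩
    · -- disjoint from R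
      rw [Set.eq_empty_iff_forall_notMem]
      rintro y ⟨hy1, hy2, hy3⟩
      exact absurd (wmin_le _ hne ⟨hy1, hy2⟩) (not_le.2 hy3)
  -- choose the witnessing relative clubs
  have hch : ∀ b : α, ∃ c, b ∈ R' → ClubBelow b c ∧ R ∩ c = ∅ := by
    intro b
    by_cases h : b ∈ R'
    · obtain ⟨-, c, hc⟩ := h
      exact ⟨c, fun _ => hc⟩
    · exact ⟨∅, fun h' => absurd h' h⟩
  choose cb hcb using hch
  -- facts about the enumeration of `cb b` for `b ∈ R'`
  have hsub : ∀ b ∈ R', cb b ⊆ Set.Iio b := fun b hb => ((hcb b hb).1).1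
  have hunbd : ∀ b ∈ R', ∀ z < b, ∃ y ∈ cb b, z < y := fun b hb => ((hcb b hb).1).2.2
  have hcof : ∀ b ∈ R', ∀ i ∈ CofSet b, b ≤ i := fun b hb => hRcof b hb.1
  -- the key claim
  have claim : ∃ ξ, ∀ η, IsStatIn {b | b ∈ R' ∧ ξ < b ∧ η < enumSet (cb b) ξ} := by
    by_contra hcon
    push_neg at hcon
    have hch2 : ∀ ξ : α, ∃ η, ∃ d : Set α, IsClubIn d ∧
        {b | b ∈ R' ∧ ξ < b ∧ η < enumSet (cb b) ξ} ∩ d = ∅ := by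
      intro ξ
      obtain ⟨η, hη⟩ := hcon ξ
      obtain ⟨d, hd1, hd2⟩ := not_isStatIn_iff.1 hη
      exact ⟨η, d, hd1, hd2⟩
    choose η d hd1 hd2 using hch2
    have hD : IsClubIn {k : α | ∀ i < k, k ∈ d i} := isClubIn_diagInter hreg hunc hinit hd1
    have hE : IsClubIn {k : α | ∀ i < k, k ∈ Set.Ioi (η i)} :=
      isClubIn_diagInter hreg hunc hinit (fun i => isClubIn_Ioi hreg hunc hinit (η i))
    obtain ⟨a0, ha0R, ha0D, ha0E⟩ : ∃ a0, a0 ∈ R ∧ (∀ i < a0, a0 ∈ d i) ∧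
        (∀ i < a0, η i < a0) := by
      obtain ⟨a0, h1, h2, h3⟩ := hR _ (hD.inter hreg hunc hinit hE)
      exact ⟨a0, h1, h2, h3⟩
    obtain ⟨b, hbR', hbD, hba0⟩ : ∃ b, b ∈ R' ∧ (∀ i < b, b ∈ d i) ∧ a0 < b := by
      obtain ⟨b, h1, h2, h3⟩ := hR' _ (hD.inter hreg hunc hinit
        (isClubIn_Ioi hreg hunc hinit a0))
      exact ⟨b, h1, h2, h3⟩
    have hbsub := hsub b hbR'
    have hbunbd := hunbd b hbR'
    have hbcof := hcof b hbR'
    have hMne : {ξ | ξ < b ∧ a0 ≤ enumSet (cb b) ξ}.Nonempty := by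
      obtain ⟨ξ, hξ1, hξ2⟩ := (isLUB_iff'.1 (hRlim b hbR'.1).2).2 a0 hba0
      exact ⟨ξ, hξ1, (le_of_lt hξ2).trans (enum_ge hbsub hbunbd hbcof hξ1)⟩
    set ξ0 := wmin _ hMne with hξ0def
    have hξ0 := wmin_mem _ hMne
    rcases lt_or_ge ξ0 a0 with hcase | hcase
    · -- ξ0 < a0 : contradiction with the club d ξ0
      have hbd : b ∈ d ξ0 := hbD ξ0 hξ0.1
      have : b ∈ {b' | b' ∈ R' ∧ ξ0 < b' ∧ η ξ0 < enumSet (cb b') ξ0} ∩ d ξ0 :=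
        ⟨⟨hbR', hξ0.1, (ha0E ξ0 hcase).trans_le hξ0.2⟩, hbd⟩
      rw [hd2 ξ0] at this
      exact this
    · -- a0 ≤ ξ0 : a0 is a limit of points of cb b, hence in cb b, contradicting disjointness
      have hesmall : ∀ ζ < a0, enumSet (cb b) ζ < a0 := by
        intro ζ hζ
        by_contra hge
        push_neg at hge
        exact absurd (wmin_le _ hMne ⟨hζ.trans hba0, hge⟩) (not_le.2 (hζ.trans_le hcase))
      set s := {y | ∃ ζ, ζ < a0 ∧ enumSet (cb b) ζ = y} with hsdef
      have hsne : s.Nonempty := by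
        obtain ⟨w, hw⟩ := (hRlim a0 ha0R).1
        exact ⟨enumSet (cb b) w, w, hw, rfl⟩
      have hssub : s ⊆ cb b := by
        rintro y ⟨ζ, hζ, rfl⟩
        exact (enum_mem hbsub hbunbd hbcof (hζ.trans hba0)).1
      have hslub : IsLUB s a0 := by
        rw [isLUB_iff']
        constructor
        · rintro y ⟨ζ, hζ, rfl⟩
          exact (hesmall ζ hζ).le
        · intro z hz
          obtain ⟨ζ, hζ1, hζ2⟩ := (isLUB_iff'.1 (hRlim a0 ha0R).2).2 z hz
          exact ⟨enumSet (cb b) ζ, ⟨ζ, hζ1, rfl⟩,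
            hζ2.trans_le (enum_ge hbsub hbunbd hbcof (hζ1.trans hba0))⟩
      have ha0cb : a0 ∈ cb b := ((hcb b hbR').1).2.1 s hssub hsne a0 hba0 hslub
      have : a0 ∈ R ∩ cb b := ⟨ha0R, ha0cb⟩
      rw [(hcb b hbR').2] at this
      exact this
  obtain ⟨ξ, hξ⟩ := claim
  refine split_of_regressive hreg hunc hinit
    (show {b | b ∈ R' ∧ ξ < b} ⊆ x from fun b hb => hRx hb.1.1)
    (g := fun b => enumSet (cb b) ξ) ?_ ?_
  · rintro b ⟨hb1, hb2⟩
    exact hsub b hb1 ((enum_mem (hsub b hb1) (hunbd b hb1) (hcof b hb1) hb2).1)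
  · intro η
    refine (hξ η).mono ?_
    rintro b ⟨h1, h2, h3⟩
    exact ⟨⟨h1, h2⟩, h3⟩

end Solovay

section Backward
variable {α : Type u} [LinearOrder α] [WellFoundedLT α]
variable (hreg : (#α).IsRegular) (hunc : ℵ₀ < #α) (hinit : ∀ a : α, #(Set.Iio a) < #α)

include hreg hunc hinit in
lemma univ_isStatIn : IsStatIn (Set.univ : Set α) := by
  intro c hc
  haveI := nonempty_alpha (α := α) hunc
  obtain ⟨b, hb, _⟩ := hc.2 (Classical.arbitrary α)
  exact ⟨b, Set.mem_univ b, hb⟩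

include hreg hunc hinit in
/-- Solovay splitting: every stationary set is stationarily split by a stationary set. -/
lemma exists_statSplit {x : Set α} (hx : IsStatIn x) :
    ∃ y, IsStatIn y ∧ StatSplits y x := by
  classical
  haveI := nonempty_alpha (α := α) hunc
  have hL : IsClubIn (limpts (Set.univ : Set α)) :=
    isClubIn_limpts hreg hunc hinit (isClubIn_univ hreg hunc hinit)
  have hLlim : ∀ a ∈ limpts (Set.univ : Set α),
      (Set.Iio a).Nonempty ∧ IsLUB (Set.Iio a) a := by
    rintro a ⟨h1, h2⟩
    rw [Set.univ_inter] at h1 h2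
    exact ⟨h1, h2⟩
  set W := x ∩ limpts (Set.univ : Set α) with hWdef
  have hW : IsStatIn W := hx.inter_club hreg hunc hinit hL
  have hWlim : ∀ a ∈ W, (Set.Iio a).Nonempty ∧ IsLUB (Set.Iio a) a :=
    fun a ha => hLlim a ha.2
  set cof : α → α := fun a => if h : (CofSet a).Nonempty then wmin _ h else a with hcofdef
  have hcofne : ∀ a ∈ W, (CofSet a).Nonempty := fun a ha => ⟨a, lim_mem_cofSet (hWlim a ha)⟩
  have hcof_eq : ∀ a ∈ W, ∀ h : (CofSet a).Nonempty, cof a = wmin _ h := by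
    intro a ha h
    rw [hcofdef]
    dsimp only
    rw [dif_pos h]
  have hcof_mem : ∀ a ∈ W, cof a ∈ CofSet a := by
    intro a ha
    rw [hcof_eq a ha (hcofne a ha)]
    exact wmin_mem _ _
  by_cases hW1 : IsStatIn {a | a ∈ W ∧ cof a < a}
  · -- Case 1: concentrate on a fixed cofinality via Fodor
    obtain ⟨lam, hT⟩ := fodor hreg hunc hinit hW1 (fun a ha => ha.2)
    refine split_of_uniform_cof hreg hunc hinit (lam := lam)
      (show {a | a ∈ W ∧ cof a < a} ∩ cof ⁻¹' {lam} ⊆ x from fun a ha => ha.1.1.1) hT ?_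
    rintro a ⟨⟨haW, -⟩, hpre⟩
    have heq : cof a = lam := hpre
    exact heq ▸ hcof_mem a haW
  · -- Case 2: the "regular" case
    have hW2 : IsStatIn {a | a ∈ W ∧ ¬ cof a < a} := by
      by_contra h2
      refine not_isStatIn_union hreg hunc hinit hW1 h2 (hW.mono ?_)
      intro a ha
      by_cases h : cof a < a
      · exact Or.inl ⟨ha, h⟩
      · exact Or.inr ⟨ha, h⟩
    -- find b0 with infinitely many predecessors
    obtain ⟨b0, hb0inf⟩ : ∃ b0 : α, (Set.Iio b0).Infinite := by
      have hstep : ∀ z : α, ∃ y, z < y := exists_gt' hreg hunc hinit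
      choose nxt hnxt using hstep
      set f : ℕ → α := fun n => Nat.rec (Classical.arbitrary α) (fun _ z => nxt z) n with hf
      have hmono : StrictMono f := strictMono_nat_of_lt_succ (fun n => hnxt (f n))
      have hrc : #(Set.range f) < #α := (Set.countable_range f).le_aleph0.trans_lt hunc
      obtain ⟨b0, hb0⟩ := exists_forall_lt_of_card_lt hreg hunc hinit hrc
      refine ⟨b0, Set.infinite_of_injective_forall_mem (f := f) hmono.injective ?_⟩
      exact fun n => hb0 (f n) ⟨n, rfl⟩
    set R := {a | a ∈ W ∧ ¬ cof a < a} ∩ Set.Ioi b0 with hRdef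
    have hRstat : IsStatIn R := hW2.inter_club hreg hunc hinit (isClubIn_Ioi hreg hunc hinit b0)
    have hRW : ∀ a ∈ R, a ∈ W := fun a ha => ha.1.1
    have hRcof : ∀ a ∈ R, ∀ i ∈ CofSet a, a ≤ i := by
      intro a ha i hi
      have h1 : cof a ≤ i := by
        rw [hcof_eq a (hRW a ha) ⟨i, hi⟩]
        exact wmin_le _ _ hi
      exact (not_lt.1 ha.1.2).trans h1
    have hRω : ∀ a ∈ R, ∀ f : ℕ → α, (∀ n, f n < a) → ¬ IsLUB (Set.range f) a := by
      intro a ha f hf hlub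
      set j := hb0inf.natEmbedding with hjdef
      set F : α → α := fun z => if h : ∃ n, ((j n : α)) = z then f h.choose else f 0 with hFdef
      have hmem : b0 ∈ CofSet a := by
        refine ⟨F, fun y hy => ?_⟩
        obtain ⟨z, ⟨n, rfl⟩, hz2⟩ := (isLUB_iff'.1 hlub).2 y hy
        refine ⟨(j n : α), (j n).2, ?_⟩
        have hex : ∃ m, ((j m : α)) = (j n : α) := ⟨n, rfl⟩
        have hFx : F (j n : α) = f n := by
          rw [hFdef]
          dsimp only
          rw [dif_pos hex]
          congr 1
          exact j.injective (Subtype.ext hex.choose_spec)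
        rw [hFx]
        exact ⟨hz2, hf n⟩
      exact absurd (hRcof a ha b0 hmem) (not_le.2 ha.2)
    exact case2_split hreg hunc hinit (fun a ha => (hRW a ha).1) hRstat
      (fun a ha => hWlim a (hRW a ha)) hRcof hRω

include hreg hunc hinit in
lemma splitting_family_large (hP : NormalStarFilterProperty α) {S : Set (Set α)}
    (hS1 : ∀ y ∈ S, IsStatIn y)
    (hS2 : ∀ x : Set α, IsStatIn x → ∃ y ∈ S, StatSplits y x) : #α < #S := by
  by_contra hle
  push_neg at hle
  obtain ⟨F, hFu, hFn, hFm⟩ := hP S hle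
  obtain ⟨y0, hy0, -⟩ := hS2 Set.univ (univ_isStatIn hreg hunc hinit)
  obtain ⟨emb⟩ := Cardinal.le_def _ _ |>.1 hle
  classical
  set g : α → Set α := fun i =>
    if h : ∃ y : ↥S, emb y = i then ((h.choose : ↥S) : Set α) else y0 with hgdef
  have hgS : ∀ i, g i ∈ S := by
    intro i
    rw [hgdef]
    dsimp only
    split
    · next h => exact h.choose.2
    · exact hy0
  have hgsurj : ∀ y ∈ S, ∃ i, g i = y := by
    intro y hy
    refine ⟨emb ⟨y, hy⟩, ?_⟩
    rw [hgdef]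
    dsimp only
    have h : ∃ y' : ↥S, emb y' = emb ⟨y, hy⟩ := ⟨⟨y, hy⟩, rfl⟩
    rw [dif_pos h]
    have := emb.injective h.choose_spec
    rw [this]
  set fs : α → Set α := fun i => if g i ∈ F then g i else (g i)ᶜ with hfsdef
  have hfsF : ∀ i, fs i ∈ F := by
    intro i
    rw [hfsdef]
    dsimp only
    split
    · assumption
    · next h =>
      rcases hFm (g i) (hgS i) with h' | h'
      · exact absurd h' h
      · exact h'
  have hD : IsStatIn {k : α | ∀ i < k, k ∈ fs i} := hFn fs hfsF
  obtain ⟨y, hyS, hsp⟩ := hS2 _ hD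
  obtain ⟨i, hgi⟩ := hgsurj y hyS
  have hnb : ∀ t : Set α, t ⊆ Set.Iic i → ¬ IsStatIn t := fun t ht =>
    not_isStatIn_of_bddAbove hreg hunc hinit (BddAbove.mono ht (bddAbove_Iic))
  by_cases hF : g i ∈ F
  · have hfsi : fs i = y := by rw [hfsdef]; dsimp only; rw [if_pos hF, hgi]
    refine hnb _ ?_ hsp.2
    rintro k ⟨hk1, hk2⟩
    by_contra hik
    rw [Set.mem_Iic] at hik
    push_neg at hik
    exact hk2 (hfsi ▸ hk1 i hik)
  · have hfsi : fs i = yᶜ := by rw [hfsdef]; dsimp only; rw [if_neg hF, hgi]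
    refine hnb _ ?_ hsp.1
    rintro k ⟨hk1, hk2⟩
    by_contra hik
    rw [Set.mem_Iic] at hik
    push_neg at hik
    have := hk1 i hik
    rw [hfsi] at this
    exact this hk2

end Backward

theorem statSplittingNumber_gt_iff_normalStarFilterProperty' {α : Type u} [LinearOrder α]
    [WellFoundedLT α]
    (hreg : (#α).IsRegular) (hunc : ℵ₀ < #α)
    (hinit : ∀ a : α, #(Set.Iio a) < #α) :
    #α < statSplittingNumber α ↔ NormalStarFilterProperty α := by
  constructor
  · intro hlt
    refine forward_dir hreg hunc hinit ?_
    intro S hS1 hScard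
    by_contra hcon
    push_neg at hcon
    have hmem : #S ∈ { c : Cardinal | ∃ S' : Set (Set α), (∀ y ∈ S', IsStatIn y) ∧
        (∀ x : Set α, IsStatIn x → ∃ y ∈ S', StatSplits y x) ∧ c = #S' } := by
      refine ⟨S, hS1, ?_, rfl⟩
      intro x hx
      obtain ⟨y, hy1, hy2⟩ := hcon x hx
      exact ⟨y, hy1, hy2⟩
    have : statSplittingNumber α ≤ #S := csInf_le' hmem
    exact absurd (this.trans hScard) (not_le.2 hlt)
  · intro hP
    have hne : { c : Cardinal | ∃ S' : Set (Set α), (∀ y ∈ S', IsStatIn y) ∧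
        (∀ x : Set α, IsStatIn x → ∃ y ∈ S', StatSplits y x) ∧ c = #S' }.Nonempty := by
      refine ⟨#{y : Set α | IsStatIn y}, {y : Set α | IsStatIn y}, fun y hy => hy, ?_, rfl⟩
      intro x hx
      obtain ⟨y, hy1, hy2⟩ := exists_statSplit hreg hunc hinit hx
      exact ⟨y, hy1, hy2⟩
    have hmem := csInf_mem hne
    obtain ⟨S, hS1, hS2, heq⟩ := hmem
    rw [statSplittingNumber, heq]
    exact splitting_family_large hreg hunc hinit hP hS1 hS2

/-- For a regular uncountable cardinal `κ`, `s^cl_κ > κ` if and only if `κ` has the normal*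
filter property. Here `κ` is represented as a well-ordered type `α` of regular uncountable
cardinality all of whose proper initial segments are of size `< #α`. -/
theorem statSplittingNumber_gt_iff_normalStarFilterProperty {α : Type*} [LinearOrder α]
    [WellFoundedLT α]
    (hreg : (#α).IsRegular) (hunc : ℵ₀ < #α)
    (hinit : ∀ a : α, #(Set.Iio a) < #α) :
    #α < statSplittingNumber α ↔ NormalStarFilterProperty α :=
  statSplittingNumber_gt_iff_normalStarFilterProperty' hreg hunc hinit
end
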